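/- arXiv:1509.06357 — 2 statements merged into one kernel-verified Lean document; each statement's English description precedes it below -/
import Mathlib

section
/- For every q ∈ ℕ and p = 4q+4, let G^I_p be the graph with vertex set {v_0, …, v_{p−1}} and edge set {v_0v_3} ∪ {v_i v_{i+1} : 0 ≤ i ≤ p−2} ∪ {v_i v_{i+2} : 0 ≤ i ≤ p−3}. Then the contracted solution graph C^c_4(G^I_p, {v_{p−2}, v_{p−1}}) has at least 4! = 24 connected components that each contain at least 2^q nodes. -/
open SimpleGraph

/-- A proper `k`-coloring of a graph. -/
def IsColoring {W : Type*} (G : SimpleGraph W) (k : ℕ) (α : W → Fin k) : Prop :=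
  ∀ u v : W, G.Adj u v → α u ≠ α v

/-- The `k`-color graph `C_k(G)`: nodes are proper `k`-colorings of `G`,
two colorings being adjacent iff they differ on exactly one vertex. -/
def colorGraph {W : Type*} (G : SimpleGraph W) (k : ℕ) :
    SimpleGraph {α : W → Fin k // IsColoring G k α} where
  Adj α β := ∃! w, α.1 w ≠ β.1 w
  symm := ⟨by
    rintro α β ⟨w, hw, hu⟩
    exact ⟨w, hw.symm, fun u hu' => hu u hu'.symm⟩⟩
  loopless := ⟨by
    rintro α ⟨w, hw, -⟩
    exact hw rfl⟩

/-- The subgraph of a labeled graph consisting of the edges between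
equally labeled nodes. -/
def sameLabelSub {N L : Type*} (H : SimpleGraph N) (f : N → L) : SimpleGraph N where
  Adj x y := H.Adj x y ∧ f x = f y
  symm := ⟨fun _ _ h => ⟨h.1.symm, h.2.symm⟩⟩
  loopless := ⟨fun x h => H.loopless.irrefl x h.1⟩

/-- The quotient graph obtained from a labeled graph by contracting every
(maximal) connected set of equally labeled nodes (i.e. every label component)
into a single node. -/
def quotGraph {N L : Type*} (H : SimpleGraph N) (f : N → L) :
    SimpleGraph (sameLabelSub H f).ConnectedComponent where
  Adj c d := c ≠ d ∧ ∃ a b, (sameLabelSub H f).connectedComponentMk a = c ∧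
      (sameLabelSub H f).connectedComponentMk b = d ∧ H.Adj a b
  symm := ⟨by
    rintro c d ⟨hne, a, b, ha, hb, hab⟩
    exact ⟨hne.symm, b, a, hb, ha, hab.symm⟩⟩
  loopless := ⟨fun c h => h.1 rfl⟩

/-- The common label of a label component. -/
def quotLabel {N L : Type*} (H : SimpleGraph N) (f : N → L) :
    (sameLabelSub H f).ConnectedComponent → L :=
  SimpleGraph.ConnectedComponent.lift f (by
    intro v w p hp
    clear hp
    induction p with
    | nil => rfl
    | cons h _ ih => exact (show _ ∧ _ from h).2.trans ih)

/-- The label of a coloring: its restriction to the terminal set `T`. -/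
def csgLabelFun {W : Type*} (G : SimpleGraph W) (k : ℕ) (T : Set W) :
    {α : W → Fin k // IsColoring G k α} → (T → Fin k) :=
  fun α t => α.1 t.1

/-- The node set of the contracted solution graph: the label components. -/
abbrev CSGNode {W : Type*} (G : SimpleGraph W) (k : ℕ) (T : Set W) :=
  (sameLabelSub (colorGraph G k) (csgLabelFun G k T)).ConnectedComponent

/-- The contracted solution graph `C^c_k(G,T)`. -/
def CSG {W : Type*} (G : SimpleGraph W) (k : ℕ) (T : Set W) : SimpleGraph (CSGNode G k T) :=
  quotGraph (colorGraph G k) (csgLabelFun G k T)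

/-- The `γ`-node of the contracted solution graph: the label component containing `γ`. -/
def csgNode {W : Type*} (G : SimpleGraph W) (k : ℕ) (T : Set W)
    (γ : {α : W → Fin k // IsColoring G k α}) : CSGNode G k T :=
  (sameLabelSub (colorGraph G k) (csgLabelFun G k T)).connectedComponentMk γ

/-- The label of a node of the contracted solution graph: the common restriction
to `T` of its colorings. -/
def csgLabel {W : Type*} (G : SimpleGraph W) (k : ℕ) (T : Set W) :
    CSGNode G k T → (T → Fin k) :=
  quotLabel (colorGraph G k) (csgLabelFun G k T)

/-- The restriction of a proper coloring to an induced subgraph. -/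
def restrictColoring {W : Type*} (G : SimpleGraph W) (k : ℕ) (S : Set W)
    (γ : {α : W → Fin k // IsColoring G k α}) :
    {α : S → Fin k // IsColoring (G.induce S) k α} :=
  ⟨fun u => γ.1 u.1, fun u w h => γ.2 u.1 w.1 h⟩

/-- A graph is chordal if it contains no induced cycle of length greater than 3. -/
def Chordal {W : Type*} (G : SimpleGraph W) : Prop :=
  ∀ n : ℕ, 4 ≤ n → IsEmpty (SimpleGraph.cycleGraph n ↪g G)

/-- `S` is a vertex cut: `G - S` is disconnected. -/
def IsVertexCut {W : Type*} (G : SimpleGraph W) (S : Set W) : Prop :=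
  ¬ (G.induce Sᶜ).Preconnected

/-- `G` is `l`-connected. -/
def LConnected {W : Type*} (G : SimpleGraph W) (l : ℕ) : Prop :=
  G.Connected ∧ l + 1 ≤ Nat.card W ∧ ∀ S : Set W, IsVertexCut G S → l ≤ S.ncard

/-- A labeled graph `(H,ℓ)`, whose labels are `k`-colorings of the complete graph
on a vertex (type) `S`, is an `(|S|,k)`-color-complete graph. -/
def IsColorComplete {N S : Type*} (k : ℕ) (H : SimpleGraph N) (ℓ : N → S → Fin k) : Prop :=
  (∀ x, Function.Injective (ℓ x)) ∧
  (∀ f : S → Fin k, Function.Injective f → ∃! x, ℓ x = f) ∧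
  (∀ x y, H.Adj x y ↔ ∃! s, ℓ x s ≠ ℓ y s)

/-- The injective neighborhood property. -/
def INP {N L : Type*} (H : SimpleGraph N) (ℓ : N → L) : Prop :=
  ∀ u v w : N, H.Adj u v → H.Adj u w → v ≠ w → ℓ v ≠ ℓ w

/-- The weight `w(P)` of a walk `P` in a labeled graph: the sum over the vertices `x`
of `P` of the number of colors used by labels of neighbors of `x` in `P` but not by
the label of `x`. -/
noncomputable def walkWeight {N S : Type*} {k : ℕ} {G : SimpleGraph N} (ℓ : N → S → Fin k)
    {a b : N} (P : G.Walk a b) : ℕ :=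
  letI := Classical.decEq N
  ∑ x ∈ P.support.toFinset,
    ((⋃ y ∈ P.toSubgraph.neighborSet x, Set.range (ℓ y)) \ Set.range (ℓ x)).ncard

/-- The unit interval graph `G^I_p`, with vertex set `{v_0, …, v_{p-1}}` and edge set
`{v_0v_3} ∪ {v_i v_{i+1} : 0 ≤ i ≤ p-2} ∪ {v_i v_{i+2} : 0 ≤ i ≤ p-3}`. -/
def GIp (p : ℕ) : SimpleGraph (Fin p) where
  Adj i j := ((i.1 = 0 ∧ j.1 = 3) ∨ j.1 = i.1 + 1 ∨ j.1 = i.1 + 2) ∨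
      ((j.1 = 0 ∧ i.1 = 3) ∨ i.1 = j.1 + 1 ∨ i.1 = j.1 + 2)
  symm := ⟨fun _ _ h => h.symm⟩
  loopless := ⟨by
    intro i h
    rcases h with (⟨h1, h2⟩ | h | h) | (⟨h1, h2⟩ | h | h) <;> omega⟩

/-- The terminal set `{v_{p-2}, v_{p-1}}` of `G^I_p`. -/
def GIterm (p : ℕ) : Set (Fin p) := {x | x.1 = p - 2 ∨ x.1 = p - 1}

namespace S6

open Finset

abbrev CCX := ZMod 2 × ZMod 2

noncomputable def phi : CCX ≃ Fin 4 := Fintype.equivFinOfCardEq (by decide)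

def nz : ZMod 3 → CCX := fun x => if x = 0 then (1,0) else if x = 1 then (0,1) else (1,1)

lemma nz_ne (x : ZMod 3) : nz x ≠ 0 := by revert x; decide
lemma nz_inj {x y : ZMod 3} (h : nz x = nz y) : x = y := by revert x y h; decide
lemma nz_add_ne {x y : ZMod 3} (h : x ≠ y) : nz x + nz y ≠ 0 := by revert x y h; decide
lemma add_add_self' (a b : CCX) : a + b + a = b := by revert a b; decide

variable (q : ℕ)

noncomputable def col (c0 : CCX) (S : ℕ → ZMod 3) : Fin (4*q+4) → Fin 4 :=
  fun v => phi (c0 + ∑ l ∈ Finset.range v.1, nz (S l))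

def Valid (S : ℕ → ZMod 3) : Prop :=
  (∀ i, i + 1 ≤ 4*q + 2 → S (i+1) ≠ S i) ∧ S 2 = S 0

variable {q}

lemma sum_key {S : ℕ → ZMod 3} (hS : Valid q S) {a b : ℕ} (hb : b < 4*q+4)
    (h : b = a+1 ∨ b = a+2 ∨ (a = 0 ∧ b = 3)) :
    (∑ l ∈ Finset.range b, nz (S l)) ≠ (∑ l ∈ Finset.range a, nz (S l)) := by
  rcases h with rfl | rfl | ⟨rfl, rfl⟩
  · rw [Finset.sum_range_succ]
    intro h
    exact nz_ne (S a) (by rwa [add_eq_left] at h)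
  · rw [Finset.sum_range_succ, Finset.sum_range_succ, add_assoc]
    intro h
    rw [add_eq_left] at h
    exact nz_add_ne (fun he => hS.1 a (by omega) he.symm) h
  · rw [show (3:ℕ) = 0+1+1+1 by rfl, Finset.sum_range_succ, Finset.sum_range_succ,
      Finset.sum_range_succ, Finset.sum_range_zero, zero_add, hS.2, add_add_self']
    simpa using nz_ne (S 1)

lemma col_coloring (c0 : CCX) (S : ℕ → ZMod 3) (hS : Valid q S) :
    IsColoring (GIp (4*q+4)) 4 (col q c0 S) := by
  intro u v huv
  have h : ((u.1 = 0 ∧ v.1 = 3) ∨ v.1 = u.1 + 1 ∨ v.1 = u.1 + 2) ∨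
      ((v.1 = 0 ∧ u.1 = 3) ∨ u.1 = v.1 + 1 ∨ u.1 = v.1 + 2) := huv
  have hne : ∀ a b : ℕ, b < 4*q+4 → (b = a+1 ∨ b = a+2 ∨ (a = 0 ∧ b = 3)) →
      (phi (c0 + ∑ l ∈ Finset.range a, nz (S l)) ≠
        phi (c0 + ∑ l ∈ Finset.range b, nz (S l))) := by
    intro a b hb hab heq
    exact sum_key hS hb hab (add_left_cancel (phi.injective heq)).symm
  show col q c0 S u ≠ col q c0 S v
  unfold col
  rcases h with (⟨h1, h2⟩ | h1 | h1) | (⟨h1, h2⟩ | h1 | h1)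
  · exact h1 ▸ h2 ▸ hne 0 3 (by omega) (by omega)
  · exact h1 ▸ hne u.1 (u.1+1) (by omega) (by omega)
  · exact h1 ▸ hne u.1 (u.1+2) (by omega) (by omega)
  · exact (h1 ▸ h2 ▸ hne 0 3 (by omega) (by omega)).symm
  · exact (h1 ▸ hne v.1 (v.1+1) (by omega) (by omega)).symm
  · exact (h1 ▸ hne v.1 (v.1+2) (by omega) (by omega)).symm

noncomputable def gc (c0 : CCX) (S : ℕ → ZMod 3) (hS : Valid q S) :
    {α : Fin (4*q+4) → Fin 4 // IsColoring (GIp (4*q+4)) 4 α} :=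
  ⟨col q c0 S, col_coloring c0 S hS⟩

lemma col_congr {c0 : CCX} {S S' : ℕ → ZMod 3}
    (h : ∀ l, l ≤ 4*q+2 → S l = S' l) : col q c0 S = col q c0 S' := by
  funext v
  unfold col
  congr 2
  apply Finset.sum_congr rfl
  intro l hl
  rw [Finset.mem_range] at hl
  rw [h l (by have := v.2; omega)]

lemma col_injS {c0 : CCX} {S S' : ℕ → ZMod 3}
    (h : col q c0 S = col q c0 S') : ∀ l, l ≤ 4*q+2 → S l = S' l := by
  have sums : ∀ v : ℕ, v < 4*q+4 →
      (∑ l ∈ Finset.range v, nz (S l)) = (∑ l ∈ Finset.range v, nz (S' l)) := by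
    intro v hv
    have := congrFun h ⟨v, hv⟩
    unfold col at this
    exact add_left_cancel (phi.injective this)
  intro l hl
  have h1 := sums l (by omega)
  have h2 := sums (l+1) (by omega)
  rw [Finset.sum_range_succ, Finset.sum_range_succ, h1] at h2
  exact nz_inj (add_left_cancel h2)

end S6

namespace S6

variable {q : ℕ}

lemma adj_of_diff {α β : {α : Fin (4*q+4) → Fin 4 // IsColoring (GIp (4*q+4)) 4 α}}
    (w : Fin (4*q+4)) (hw : α.1 w ≠ β.1 w) (hother : ∀ v, v ≠ w → α.1 v = β.1 v) :
    (colorGraph (GIp (4*q+4)) 4).Adj α β :=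
  ⟨w, hw, fun y hy => by_contra fun h => hy (hother y h)⟩

lemma sums_eq_of_swap {S S' : ℕ → ZMod 3} {i : ℕ}
    (h1 : S' i = S (i+1)) (h2 : S' (i+1) = S i)
    (h0 : ∀ l, l ≠ i → l ≠ i+1 → S' l = S l) :
    ∀ m, i + 2 ≤ m → (∑ l ∈ Finset.range m, nz (S' l)) = (∑ l ∈ Finset.range m, nz (S l)) := by
  intro m hm
  induction m, hm using Nat.le_induction with
  | base =>
    rw [show i+2 = i+1+1 by rfl, Finset.sum_range_succ, Finset.sum_range_succ,
      Finset.sum_range_succ, Finset.sum_range_succ, h1, h2]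
    have hpre : (∑ l ∈ Finset.range i, nz (S' l)) = (∑ l ∈ Finset.range i, nz (S l)) :=
      Finset.sum_congr rfl fun l hl => by
        rw [Finset.mem_range] at hl; rw [h0 l (by omega) (by omega)]
    rw [hpre]; ring
  | succ m hm ih =>
    rw [Finset.sum_range_succ, Finset.sum_range_succ, ih, h0 m (by omega) (by omega)]

lemma adj_swap (c0 : CCX) {S S' : ℕ → ZMod 3} (hS : Valid q S) (hS' : Valid q S')
    {i : ℕ} (hi : i + 1 ≤ 4*q+2)
    (h1 : S' i = S (i+1)) (h2 : S' (i+1) = S i)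
    (h0 : ∀ l, l ≠ i → l ≠ i+1 → S' l = S l)
    (hne : S i ≠ S (i+1)) :
    (colorGraph (GIp (4*q+4)) 4).Adj (gc c0 S hS) (gc c0 S' hS') := by
  apply adj_of_diff ⟨i+1, by omega⟩
  · show col q c0 S _ ≠ col q c0 S' _
    unfold col
    intro h
    have h' := add_left_cancel (phi.injective h)
    simp only [] at h'
    rw [Finset.sum_range_succ, Finset.sum_range_succ, h1] at h'
    have hpre : (∑ l ∈ Finset.range i, nz (S' l)) = (∑ l ∈ Finset.range i, nz (S l)) :=
      Finset.sum_congr rfl fun l hl => by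
        rw [Finset.mem_range] at hl; rw [h0 l (by omega) (by omega)]
    rw [hpre] at h'
    exact hne (nz_inj (add_left_cancel h'))
  · intro v hv
    show col q c0 S v = col q c0 S' v
    unfold col
    congr 1
    have hvne : v.1 ≠ i + 1 := fun hh => hv (Fin.ext hh)
    rcases Nat.lt_or_ge v.1 (i+1) with hlt | hge
    · congr 1
      exact (Finset.sum_congr rfl fun l hl => by
        rw [Finset.mem_range] at hl
        rw [h0 l (by omega) (by omega)]).symm
    · have : i + 2 ≤ v.1 := by omega
      exact congrArg (c0 + ·) (sums_eq_of_swap h1 h2 h0 v.1 this).symm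

end S6

namespace S6

variable {q : ℕ}

lemma adj_last (c0 : CCX) {S S' : ℕ → ZMod 3} (hS : Valid q S) (hS' : Valid q S')
    (hd : S' (4*q+2) ≠ S (4*q+2)) (h0 : ∀ l, l < 4*q+2 → S' l = S l) :
    (colorGraph (GIp (4*q+4)) 4).Adj (gc c0 S hS) (gc c0 S' hS') := by
  apply adj_of_diff ⟨4*q+3, by omega⟩
  · show col q c0 S _ ≠ col q c0 S' _
    unfold col
    intro h
    have h' := add_left_cancel (phi.injective h)
    simp only [] at h'
    rw [Finset.sum_range_succ (fun l => nz (S l)) (4*q+2),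
      Finset.sum_range_succ (fun l => nz (S' l)) (4*q+2)] at h'
    have hpre : (∑ l ∈ Finset.range (4*q+2), nz (S l)) =
        (∑ l ∈ Finset.range (4*q+2), nz (S' l)) :=
      Finset.sum_congr rfl fun l hl => by
        rw [Finset.mem_range] at hl; rw [h0 l hl]
    rw [hpre] at h'
    exact hd (nz_inj (add_left_cancel h').symm)
  · intro v hv
    show col q c0 S v = col q c0 S' v
    unfold col
    have hvne : v.1 ≠ 4*q+3 := fun hh => hv (Fin.ext hh)
    congr 2
    exact (Finset.sum_congr rfl fun l hl => by
      rw [Finset.mem_range] at hl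
      have := v.2
      rw [h0 l (by omega)]).symm

end S6

namespace S6

variable {q : ℕ}

lemma gc_eq (c0 : CCX) {S S' : ℕ → ZMod 3} (hS : Valid q S) (hS' : Valid q S')
    (h : ∀ l, l ≤ 4*q+2 → S l = S' l) : gc c0 S hS = gc c0 S' hS' :=
  Subtype.ext (col_congr h)

lemma reach_aux (c0 : CCX) : ∀ k : ℕ, ∀ (S S' : ℕ → ZMod 3) (hS : Valid q S) (hS' : Valid q S'),
    (∀ l, l + k < 4*q+2 → S l = S' l) → (∀ l, l < 3 → S l = S' l) →
    (colorGraph (GIp (4*q+4)) 4).Reachable (gc c0 S hS) (gc c0 S' hS') := by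
  intro k
  induction k with
  | zero =>
    intro S S' hS hS' hag h3
    by_cases hlast : S (4*q+2) = S' (4*q+2)
    · have heq : gc c0 S hS = gc c0 S' hS' := gc_eq c0 hS hS' (fun l hl => by
        rcases Nat.lt_or_ge l (4*q+2) with h | h
        · exact hag l (by omega)
        · have hl2 : l = 4*q+2 := by omega
          exact hl2 ▸ hlast)
      rw [heq]
    · exact (adj_last c0 hS hS' (fun h => hlast h.symm)
        (fun l hl => (hag l (by omega)).symm)).reachable
  | succ k IH =>
    intro S S' hS hS' hag h3
    by_cases hred : (4*q+1-k < 3) ∨ S (4*q+1-k) = S' (4*q+1-k) ∨ 4*q+2 ≤ k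
    · apply IH S S' hS hS'
      · intro l hl
        rcases Nat.lt_or_ge (l+(k+1)) (4*q+2) with h | h
        · exact hag l h
        · have hlk : l = 4*q+1-k := by omega
          rcases hred with h' | h' | h'
          · exact h3 l (by omega)
          · exact hlk ▸ h'
          · omega
      · exact h3
    push_neg at hred
    obtain ⟨hge3, hcne, hklt⟩ := hred
    have hi3 : 3 ≤ 4*q+1-k := hge3
    set i := 4*q+1-k with hidef
    have hik : i + k = 4*q+1 := by omega
    have hagi : ∀ l, l < i → S l = S' l := fun l hl => hag l (by omega)
    have e1 : S' i ≠ S (i-1) := by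
      have h1 : S' (i-1+1) ≠ S' (i-1) := hS'.1 (i-1) (by omega)
      rw [show i-1+1 = i by omega] at h1
      rw [← hagi (i-1) (by omega)] at h1
      exact h1
    have e2 : S i ≠ S (i-1) := by
      have h1 : S (i-1+1) ≠ S (i-1) := hS.1 (i-1) (by omega)
      rwa [show i-1+1 = i by omega] at h1
    have e3 : S i ≠ S' i := hcne
    rcases Nat.lt_or_ge i (4*q+1) with hA | hB
    · -- subcase A : i ≤ 4q
      set T : ℕ → ZMod 3 := fun l =>
        if l ≤ i then S l else if l = i+1 then S' i
        else if (l - i) % 2 = 0 then S (i-1) else S' i with hTdef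
      have hTle : ∀ l, l ≤ i → T l = S l := by
        intro l hl; simp only [hTdef]; rw [if_pos hl]
      have hTi1 : T (i+1) = S' i := by
        simp only [hTdef]; rw [if_neg (by omega)]; simp
      have hTbig : ∀ l, i+2 ≤ l → T l = (if (l - i) % 2 = 0 then S (i-1) else S' i) := by
        intro l hl; simp only [hTdef]; rw [if_neg (by omega), if_neg (by omega)]
      have hTvalid : Valid q T := by
        constructor
        · intro j hj
          rcases Nat.lt_or_ge (j+1) (i+1) with h1 | h1
          · rw [hTle (j+1) (by omega), hTle j (by omega)]
            exact hS.1 j hj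
          rcases Nat.eq_or_lt_of_le h1 with h2 | h2
          · rw [show j+1 = i+1 by omega, hTi1, show j = i by omega, hTle i (le_refl i)]
            exact e3.symm
          rcases Nat.eq_or_lt_of_le h2 with h3 | h3
          · rw [show j+1 = i+2 by omega, show j = i+1 by omega, hTi1,
              hTbig (i+2) (by omega), if_pos (by omega)]
            exact e1.symm
          · rw [hTbig (j+1) (by omega), hTbig j (by omega)]
            by_cases hpar : (j - i) % 2 = 0
            · rw [if_pos hpar, if_neg (by omega)]
              exact e1
            · rw [if_neg hpar, if_pos (by omega)]
              exact e1.symm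
        · rw [hTle 2 (by omega), hTle 0 (by omega)]
          exact hS.2
      set U : ℕ → ZMod 3 := fun l =>
        if l = i then S' i else if l = i+1 then S i else T l with hUdef
      have hUi : U i = S' i := by simp [hUdef]
      have hUi1 : U (i+1) = S i := by
        simp only [hUdef]; rw [if_neg (by omega)]; simp
      have hUo : ∀ l, l ≠ i → l ≠ i+1 → U l = T l := by
        intro l h1 h2; simp only [hUdef]; rw [if_neg h1, if_neg h2]
      have hUvalid : Valid q U := by
        constructor
        · intro j hj
          rcases Nat.lt_or_ge (j+1) i with h1 | h1
          · rw [hUo (j+1) (by omega) (by omega), hUo j (by omega) (by omega),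
              hTle (j+1) (by omega), hTle j (by omega)]
            exact hS.1 j hj
          rcases Nat.eq_or_lt_of_le h1 with h2 | h2
          · rw [← h2, hUo j (by omega) (by omega), hTle j (by omega), hUi,
              show j = i-1 by omega]
            exact e1
          rcases Nat.eq_or_lt_of_le h2 with h3 | h3
          · rw [show j+1 = i+1 by omega, hUi1, show j = i by omega, hUi]
            exact e3
          rcases Nat.eq_or_lt_of_le h3 with h4 | h4
          · rw [show j+1 = i+2 by omega, show j = i+1 by omega, hUi1,
              hUo (i+2) (by omega) (by omega), hTbig (i+2) (by omega), if_pos (by omega)]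
            exact e2.symm
          · rw [hUo (j+1) (by omega) (by omega), hUo j (by omega) (by omega),
              hTbig (j+1) (by omega), hTbig j (by omega)]
            by_cases hpar : (j - i) % 2 = 0
            · rw [if_pos hpar, if_neg (by omega)]
              exact e1
            · rw [if_neg hpar, if_pos (by omega)]
              exact e1.symm
        · rw [hUo 2 (by omega) (by omega), hUo 0 (by omega) (by omega),
            hTle 2 (by omega), hTle 0 (by omega)]
          exact hS.2
      have r1 : (colorGraph (GIp (4*q+4)) 4).Reachable (gc c0 S hS) (gc c0 T hTvalid) :=
        IH S T hS hTvalid (fun l hl => (hTle l (by omega)).symm)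
          (fun l hl => (hTle l (by omega)).symm)
      have adjTU : (colorGraph (GIp (4*q+4)) 4).Adj (gc c0 T hTvalid) (gc c0 U hUvalid) :=
        adj_swap c0 hTvalid hUvalid (i := i) (by omega)
          (hUi.trans hTi1.symm) (hUi1.trans (hTle i (le_refl i)).symm)
          (fun l ha hb => hUo l ha hb)
          (by rw [hTle i (le_refl i), hTi1]; exact e3)
      have r2 : (colorGraph (GIp (4*q+4)) 4).Reachable (gc c0 U hUvalid) (gc c0 S' hS') := by
        apply IH U S' hUvalid hS'
        · intro l hl
          rcases Nat.lt_or_ge l i with h | h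
          · rw [hUo l (by omega) (by omega), hTle l (by omega)]
            exact hagi l h
          · rw [show l = i by omega, hUi]
        · intro l hl
          rw [hUo l (by omega) (by omega), hTle l (by omega)]
          exact hagi l (by omega)
      exact r1.trans (adjTU.reachable.trans r2)
    · -- subcase B : i = 4q+1, k = 0
      have hk0 : k = 0 := by omega
      have hieq : i = 4*q+1 := by omega
      have hq1 : 1 ≤ q := by omega
      rw [hieq] at e1 e2 e3 hagi
      set T : ℕ → ZMod 3 := fun l => if l = 4*q+2 then S' (4*q+1) else S l with hTdef
      have hT42 : T (4*q+2) = S' (4*q+1) := by simp [hTdef]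
      have hTo : ∀ l, l ≠ 4*q+2 → T l = S l := by
        intro l hl; simp only [hTdef]; rw [if_neg hl]
      have hTvalid : Valid q T := by
        constructor
        · intro j hj
          rcases Nat.lt_or_ge (j+1) (4*q+2) with h1 | h1
          · rw [hTo (j+1) (by omega), hTo j (by omega)]
            exact hS.1 j hj
          · rw [show j+1 = 4*q+2 by omega, hT42, hTo j (by omega), show j = 4*q+1 by omega]
            exact e3.symm
        · rw [hTo 2 (by omega), hTo 0 (by omega)]
          exact hS.2
      have r1 : (colorGraph (GIp (4*q+4)) 4).Reachable (gc c0 S hS) (gc c0 T hTvalid) := by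
        by_cases hS42 : S (4*q+2) = S' (4*q+1)
        · have heq : gc c0 S hS = gc c0 T hTvalid := gc_eq c0 hS hTvalid (fun l hl => by
            by_cases h : l = 4*q+2
            · rw [h, hT42]; exact hS42
            · rw [hTo l h])
          rw [heq]
        · exact (adj_last c0 hS hTvalid
            (by rw [hT42]; exact fun h => hS42 h.symm)
            (fun l hl => hTo l (by omega))).reachable
      set U : ℕ → ZMod 3 := fun l =>
        if l = 4*q+1 then S' (4*q+1) else if l = 4*q+2 then S (4*q+1) else S l with hUdef
      have hU1 : U (4*q+1) = S' (4*q+1) := by simp [hUdef]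
      have hU2 : U (4*q+2) = S (4*q+1) := by
        simp only [hUdef]; rw [if_neg (by omega)]; simp
      have hUo : ∀ l, l ≠ 4*q+1 → l ≠ 4*q+2 → U l = S l := by
        intro l h1 h2; simp only [hUdef]; rw [if_neg h1, if_neg h2]
      have hUvalid : Valid q U := by
        constructor
        · intro j hj
          rcases Nat.lt_or_ge (j+1) (4*q+1) with h1 | h1
          · rw [hUo (j+1) (by omega) (by omega), hUo j (by omega) (by omega)]
            exact hS.1 j hj
          rcases Nat.eq_or_lt_of_le h1 with h2 | h2
          · rw [show j+1 = 4*q+1 by omega, hU1, hUo j (by omega) (by omega)]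
            have hx : S j = S' j := hagi j (by omega)
            rw [hx, show j = 4*q by omega]
            have := hS'.1 (4*q) (by omega)
            exact this
          · rw [show j+1 = 4*q+2 by omega, hU2, show j = 4*q+1 by omega, hU1]
            exact e3
        · rw [hUo 2 (by omega) (by omega), hUo 0 (by omega) (by omega)]
          exact hS.2
      have adjTU : (colorGraph (GIp (4*q+4)) 4).Adj (gc c0 T hTvalid) (gc c0 U hUvalid) :=
        adj_swap c0 hTvalid hUvalid (i := 4*q+1) (by omega)
          (hU1.trans hT42.symm) (hU2.trans (hTo (4*q+1) (by omega)).symm)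
          (fun l ha hb => (hUo l ha hb).trans (hTo l hb).symm)
          (by rw [hTo (4*q+1) (by omega), hT42]; exact e3)
      have r2 : (colorGraph (GIp (4*q+4)) 4).Reachable (gc c0 U hUvalid) (gc c0 S' hS') := by
        apply IH U S' hUvalid hS'
        · intro l hl
          by_cases h : l = 4*q+1
          · rw [h, hU1]
          · rw [hUo l h (by omega)]
            exact hag l (by omega)
        · intro l hl
          rw [hUo l (by omega) (by omega)]
          exact h3 l hl
      exact r1.trans (adjTU.reachable.trans r2)

end S6

namespace S6

variable {q : ℕ}

def pat (e : ZMod 3) : Bool → ℕ → ZMod 3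
  | true, r => if r < 2 then e else -e
  | false, r => if r % 2 = 0 then e else -e

def dd (e : ZMod 3) (b : ℕ → Bool) : ℕ → ZMod 3 := fun l =>
  if l = 0 then 0 else if l = 1 then e else if l = 2 then -e
  else pat e (b ((l-3)/4)) ((l-3) % 4)

def SS (t e : ZMod 3) (b : ℕ → Bool) : ℕ → ZMod 3 :=
  fun l => t + ∑ m ∈ Finset.range l, dd e b (m+1)

lemma pat_pm (e : ZMod 3) (bb : Bool) (r : ℕ) : pat e bb r = e ∨ pat e bb r = -e := by
  cases bb
  · show (if r % 2 = 0 then e else -e) = e ∨ (if r % 2 = 0 then e else -e) = -e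
    by_cases h : r % 2 = 0
    · rw [if_pos h]; left; rfl
    · rw [if_neg h]; right; rfl
  · show (if r < 2 then e else -e) = e ∨ (if r < 2 then e else -e) = -e
    by_cases h : r < 2
    · rw [if_pos h]; left; rfl
    · rw [if_neg h]; right; rfl

lemma dd_pm (e : ZMod 3) (b : ℕ → Bool) (l : ℕ) (hl : 1 ≤ l) :
    dd e b l = e ∨ dd e b l = -e := by
  unfold dd
  rw [if_neg (by omega)]
  by_cases h1 : l = 1
  · rw [if_pos h1]; left; rfl
  rw [if_neg h1]
  by_cases h2 : l = 2
  · rw [if_pos h2]; right; rfl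
  rw [if_neg h2]
  exact pat_pm e _ _

lemma neg_ne_self {e : ZMod 3} (he : e ≠ 0) : e ≠ -e := by revert e; decide

lemma pm_ne_zero {e x : ZMod 3} (he : e ≠ 0) (h : x = e ∨ x = -e) : x ≠ 0 := by
  rcases h with rfl | rfl
  · exact he
  · simpa using he

lemma SS_succ (t e : ZMod 3) (b : ℕ → Bool) (l : ℕ) :
    SS t e b (l+1) = SS t e b l + dd e b (l+1) := by
  unfold SS
  rw [Finset.sum_range_succ, add_assoc]

lemma SS_valid (t : ZMod 3) {e : ZMod 3} (he : e ≠ 0) (b : ℕ → Bool) :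
    Valid q (SS t e b) := by
  constructor
  · intro i _
    rw [SS_succ]
    intro h
    rw [add_eq_left] at h
    exact pm_ne_zero he (dd_pm e b (i+1) (by omega)) h
  · show SS t e b 2 = SS t e b 0
    unfold SS
    rw [Finset.sum_range_succ, Finset.sum_range_succ, Finset.sum_range_zero]
    show t + (0 + dd e b 1 + dd e b 2) = t + 0
    have h1 : dd e b 1 = e := rfl
    have h2 : dd e b 2 = -e := rfl
    rw [h1, h2]
    ring

lemma dd_pat (e : ZMod 3) (b : ℕ → Bool) (j r : ℕ) (hr : r < 4) :
    dd e b (3 + (4*j + r)) = pat e (b j) r := by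
  unfold dd
  rw [if_neg (by omega), if_neg (by omega), if_neg (by omega)]
  rw [show 3 + (4*j + r) - 3 = 4*j + r by omega]
  have h1 : (4*j+r)/4 = j := by omega
  have h2 : (4*j+r)%4 = r := by omega
  rw [h1, h2]

lemma pat0 (e : ZMod 3) (bb : Bool) : pat e bb 0 = e := by cases bb <;> rfl
lemma pat3 (e : ZMod 3) (bb : Bool) : pat e bb 3 = -e := by cases bb <;> rfl

lemma dd_run (e : ZMod 3) (b : ℕ → Bool) (v : ℕ) (h4 : 4 ≤ v) :
    dd e b v = -(dd e b (v-1)) ∨ dd e b (v+1) = -(dd e b v) := by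
  obtain ⟨j, r, hr, hm⟩ : ∃ j r, r < 4 ∧ v - 3 = 4*j + r :=
    ⟨(v-3)/4, (v-3)%4, by omega, by omega⟩
  have hv : v = 3 + (4*j + r) := by omega
  interval_cases r
  · -- r = 0, j ≥ 1
    left
    have hj : 1 ≤ j := by omega
    rw [hv, dd_pat e b j 0 (by omega), pat0]
    rw [show 3 + (4*j+0) - 1 = 3 + (4*(j-1) + 3) by omega, dd_pat e b (j-1) 3 (by omega), pat3]
    rw [neg_neg]
  · -- r = 1
    cases hb : b j
    · left
      rw [hv, dd_pat e b j 1 (by omega), show 3 + (4*j+1) - 1 = 3 + (4*j+0) by omega,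
        dd_pat e b j 0 (by omega), pat0, hb]
      rfl
    · right
      rw [hv, show 3 + (4*j+1) + 1 = 3 + (4*j+2) by omega, dd_pat e b j 2 (by omega),
        dd_pat e b j 1 (by omega), hb]
      rfl
  · -- r = 2
    cases hb : b j
    · right
      rw [hv, show 3 + (4*j+2) + 1 = 3 + (4*j+3) by omega, dd_pat e b j 3 (by omega),
        dd_pat e b j 2 (by omega), hb, pat3]
      rfl
    · left
      rw [hv, dd_pat e b j 2 (by omega), show 3 + (4*j+2) - 1 = 3 + (4*j+1) by omega,
        dd_pat e b j 1 (by omega), hb]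
      rfl
  · -- r = 3
    cases hb : b j
    · left
      rw [hv, dd_pat e b j 3 (by omega), pat3, show 3 + (4*j+3) - 1 = 3 + (4*j+2) by omega,
        dd_pat e b j 2 (by omega), hb]
      rfl
    · right
      rw [hv, show 3 + (4*j+3) + 1 = 3 + (4*(j+1)+0) by omega, dd_pat e b (j+1) 0 (by omega),
        pat0, dd_pat e b j 3 (by omega), pat3, neg_neg]

lemma SS_frozen (t : ZMod 3) (e : ZMod 3) (b : ℕ → Bool) (v : ℕ) (h4 : 4 ≤ v) :
    SS t e b v = SS t e b (v-2) ∨ SS t e b (v+1) = SS t e b (v-1) := by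
  rcases dd_run e b v h4 with h | h
  · left
    have h1 : SS t e b v = SS t e b (v-1) + dd e b v := by
      have hx := SS_succ t e b (v-1)
      rwa [show v-1+1 = v by omega] at hx
    have h2 : SS t e b (v-1) = SS t e b (v-2) + dd e b (v-1) := by
      have hx := SS_succ t e b (v-2)
      rwa [show v-2+1 = v-1 by omega] at hx
    rw [h1, h2, h, add_assoc]
    simp
  · right
    have h1 : SS t e b (v+1) = SS t e b (v-1) + dd e b v + dd e b (v+1) := by
      have hx := SS_succ t e b (v-1)
      rw [show v-1+1 = v by omega] at hx
      rw [SS_succ, hx]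
    rw [h1, h, add_assoc]
    simp

end S6

namespace S6

variable {q : ℕ}

lemma gadj {a b : Fin (4*q+4)}
    (h : (a.1 = 0 ∧ b.1 = 3) ∨ b.1 = a.1+1 ∨ b.1 = a.1+2 ∨
      (b.1 = 0 ∧ a.1 = 3) ∨ a.1 = b.1+1 ∨ a.1 = b.1+2) : (GIp (4*q+4)).Adj a b := by
  show ((a.1 = 0 ∧ b.1 = 3) ∨ b.1 = a.1 + 1 ∨ b.1 = a.1 + 2) ∨
      ((b.1 = 0 ∧ a.1 = 3) ∨ a.1 = b.1 + 1 ∨ a.1 = b.1 + 2)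
  omega

lemma vne {x y : Fin 4} (h : x ≠ y) : x.1 ≠ y.1 := fun h' => h (Fin.ext h')

lemma frozen4 {α β : {f : Fin (4*q+4) → Fin 4 // IsColoring (GIp (4*q+4)) 4 f}}
    (h : (colorGraph (GIp (4*q+4)) 4).Adj α β) :
    ∀ v : Fin (4*q+4), v.1 < 4 → α.1 v = β.1 v := by
  obtain ⟨w, hw, hu⟩ := h
  intro v hv
  by_contra hne
  have hvw : v = w := hu v hne
  subst hvw
  have hoth : ∀ u : Fin (4*q+4), u ≠ v → α.1 u = β.1 u :=
    fun u hu' => by_contra fun hh => hu' (hu u hh)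
  set W0 : Fin (4*q+4) := ⟨0, by omega⟩ with hW0
  set W1 : Fin (4*q+4) := ⟨1, by omega⟩ with hW1
  set W2 : Fin (4*q+4) := ⟨2, by omega⟩ with hW2
  set W3 : Fin (4*q+4) := ⟨3, by omega⟩ with hW3
  have w0 : W0.1 = 0 := by rw [hW0]
  have w1 : W1.1 = 1 := by rw [hW1]
  have w2 : W2.1 = 2 := by rw [hW2]
  have w3 : W3.1 = 3 := by rw [hW3]
  have a01 : α.1 W0 ≠ α.1 W1 := α.2 W0 W1 (gadj (by omega))
  have a02 : α.1 W0 ≠ α.1 W2 := α.2 W0 W2 (gadj (by omega))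
  have a03 : α.1 W0 ≠ α.1 W3 := α.2 W0 W3 (gadj (by omega))
  have a12 : α.1 W1 ≠ α.1 W2 := α.2 W1 W2 (gadj (by omega))
  have a13 : α.1 W1 ≠ α.1 W3 := α.2 W1 W3 (gadj (by omega))
  have a23 : α.1 W2 ≠ α.1 W3 := α.2 W2 W3 (gadj (by omega))
  have key : ∀ u1 u2 u3 : Fin (4*q+4),
      α.1 v ≠ α.1 u1 → α.1 v ≠ α.1 u2 → α.1 v ≠ α.1 u3 →
      α.1 u1 ≠ α.1 u2 → α.1 u1 ≠ α.1 u3 → α.1 u2 ≠ α.1 u3 →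
      u1 ≠ v → u2 ≠ v → u3 ≠ v →
      (GIp (4*q+4)).Adj v u1 → (GIp (4*q+4)).Adj v u2 → (GIp (4*q+4)).Adj v u3 → False := by
    intro u1 u2 u3 c1 c2 c3 c4 c5 c6 n1 n2 n3 d1 d2 d3
    have b1 : β.1 v ≠ α.1 u1 := by rw [hoth u1 n1]; exact β.2 v u1 d1
    have b2 : β.1 v ≠ α.1 u2 := by rw [hoth u2 n2]; exact β.2 v u2 d2
    have b3 : β.1 v ≠ α.1 u3 := by rw [hoth u3 n3]; exact β.2 v u3 d3
    have b0 : α.1 v ≠ β.1 v := hne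
    have l0 := (α.1 v).isLt
    have l1 := (α.1 u1).isLt
    have l2 := (α.1 u2).isLt
    have l3 := (α.1 u3).isLt
    have l4 := (β.1 v).isLt
    have := vne c1; have := vne c2; have := vne c3; have := vne c4
    have := vne c5; have := vne c6; have := vne b1; have := vne b2
    have := vne b3; have := vne b0
    omega
  have hv4 : v.1 = 0 ∨ v.1 = 1 ∨ v.1 = 2 ∨ v.1 = 3 := by omega
  rcases hv4 with h0 | h0 | h0 | h0
  · have hv' : v = W0 := Fin.ext (by omega)
    exact key W1 W2 W3 (by rw [hv']; exact a01) (by rw [hv']; exact a02)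
      (by rw [hv']; exact a03) a12 a13 a23
      (fun h => by have := congrArg Fin.val h; omega)
      (fun h => by have := congrArg Fin.val h; omega)
      (fun h => by have := congrArg Fin.val h; omega)
      (gadj (by omega)) (gadj (by omega)) (gadj (by omega))
  · have hv' : v = W1 := Fin.ext (by omega)
    exact key W0 W2 W3 (by rw [hv']; exact a01.symm) (by rw [hv']; exact a12)
      (by rw [hv']; exact a13) a02 a03 a23
      (fun h => by have := congrArg Fin.val h; omega)
      (fun h => by have := congrArg Fin.val h; omega)
      (fun h => by have := congrArg Fin.val h; omega)
      (gadj (by omega)) (gadj (by omega)) (gadj (by omega))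
  · have hv' : v = W2 := Fin.ext (by omega)
    exact key W0 W1 W3 (by rw [hv']; exact a02.symm) (by rw [hv']; exact a12.symm)
      (by rw [hv']; exact a23) a01 a03 a13
      (fun h => by have := congrArg Fin.val h; omega)
      (fun h => by have := congrArg Fin.val h; omega)
      (fun h => by have := congrArg Fin.val h; omega)
      (gadj (by omega)) (gadj (by omega)) (gadj (by omega))
  · have hv' : v = W3 := Fin.ext (by omega)
    exact key W0 W1 W2 (by rw [hv']; exact a03.symm) (by rw [hv']; exact a13.symm)
      (by rw [hv']; exact a23.symm) a01 a02 a12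
      (fun h => by have := congrArg Fin.val h; omega)
      (fun h => by have := congrArg Fin.val h; omega)
      (fun h => by have := congrArg Fin.val h; omega)
      (gadj (by omega)) (gadj (by omega)) (gadj (by omega))

end S6

namespace S6

variable {q : ℕ}

lemma self_add_self (a : CCX) : a + a = 0 := by revert a; decide

lemma add3_ne (X a b : CCX) (hb : b ≠ 0) : X + a + b + a ≠ X := by
  intro h
  rw [add_right_comm (X + a) b a, add_assoc X a a, self_add_self, add_zero,
    add_eq_left] at h
  exact hb h

lemma col_ne_of_sum {c0 : CCX} {S : ℕ → ZMod 3} {a b : ℕ} (ha : a < 4*q+4) (hb : b < 4*q+4)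
    (h : (∑ l ∈ Finset.range b, nz (S l)) ≠ (∑ l ∈ Finset.range a, nz (S l))) :
    col q c0 S ⟨b, hb⟩ ≠ col q c0 S ⟨a, ha⟩ := by
  intro hh
  exact h (add_left_cancel (phi.injective hh))

lemma sum3 (S : ℕ → ZMod 3) (a : ℕ) :
    (∑ l ∈ Finset.range (a+3), nz (S l)) =
      (∑ l ∈ Finset.range a, nz (S l)) + nz (S a) + nz (S (a+1)) + nz (S (a+2)) := by
  rw [show a+3 = a+2+1 by omega, Finset.sum_range_succ, Finset.sum_range_succ,
    Finset.sum_range_succ]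

lemma five_distinct {α δ : {f : Fin (4*q+4) → Fin 4 // IsColoring (GIp (4*q+4)) 4 f}}
    {w : Fin (4*q+4)} (hw : α.1 w ≠ δ.1 w)
    (hoth : ∀ u, u ≠ w → α.1 u = δ.1 u)
    (u1 u2 u3 : Fin (4*q+4))
    (c1 : α.1 w ≠ α.1 u1) (c2 : α.1 w ≠ α.1 u2) (c3 : α.1 w ≠ α.1 u3)
    (c4 : α.1 u1 ≠ α.1 u2) (c5 : α.1 u1 ≠ α.1 u3) (c6 : α.1 u2 ≠ α.1 u3)
    (n1 : u1 ≠ w) (n2 : u2 ≠ w) (n3 : u3 ≠ w)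
    (d1 : (GIp (4*q+4)).Adj w u1) (d2 : (GIp (4*q+4)).Adj w u2)
    (d3 : (GIp (4*q+4)).Adj w u3) : False := by
  have b1 : δ.1 w ≠ α.1 u1 := by rw [hoth u1 n1]; exact δ.2 w u1 d1
  have b2 : δ.1 w ≠ α.1 u2 := by rw [hoth u2 n2]; exact δ.2 w u2 d2
  have b3 : δ.1 w ≠ α.1 u3 := by rw [hoth u3 n3]; exact δ.2 w u3 d3
  have l0 := (α.1 w).isLt
  have l1 := (α.1 u1).isLt
  have l2 := (α.1 u2).isLt
  have l3 := (α.1 u3).isLt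
  have l4 := (δ.1 w).isLt
  have := vne c1; have := vne c2; have := vne c3; have := vne c4
  have := vne c5; have := vne c6; have := vne b1; have := vne b2
  have := vne b3; have := vne hw
  omega

def ext (q : ℕ) (b : Fin q → Bool) : ℕ → Bool := fun j => if h : j < q then b ⟨j, h⟩ else false

noncomputable def fam (c0 : CCX) (t : ZMod 3) {e : ZMod 3} (he : e ≠ 0) (b : Fin q → Bool) :
    {f : Fin (4*q+4) → Fin 4 // IsColoring (GIp (4*q+4)) 4 f} :=
  gc c0 (SS t e (ext q b)) (SS_valid t he (ext q b))

set_option maxHeartbeats 2000000 in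
lemma fam_no_nbr (c0 : CCX) (t : ZMod 3) {e : ZMod 3} (he : e ≠ 0) (b : Fin q → Bool)
    (δ : {f : Fin (4*q+4) → Fin 4 // IsColoring (GIp (4*q+4)) 4 f})
    (h : (sameLabelSub (colorGraph (GIp (4*q+4)) 4)
        (csgLabelFun (GIp (4*q+4)) 4 (GIterm (4*q+4)))).Adj (fam c0 t he b) δ) : False := by
  obtain ⟨hadj, hlab⟩ := h
  set α := fam c0 t he b with hα
  obtain ⟨w, hw, hu⟩ := hadj
  have hoth : ∀ u, u ≠ w → α.1 u = δ.1 u :=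
    fun u hu' => by_contra fun hh => hu' (hu u hh)
  rcases Nat.lt_or_ge w.1 4 with h4 | h4
  · exact hw (frozen4 ⟨w, hw, hu⟩ w h4)
  rcases Nat.lt_or_ge w.1 (4*q+2) with hmid | hend
  swap
  · have hwlt := w.isLt
    have hmem : w ∈ GIterm (4*q+4) := by
      show w.1 = 4*q+4-2 ∨ w.1 = 4*q+4-1
      omega
    exact hw (congrFun hlab ⟨w, hmem⟩)
  -- middle case : 4 ≤ w.1 ≤ 4q+1
  have hval : ∀ (S : ℕ → ZMod 3) (hS : Valid q S), (gc c0 S hS).1 = col q c0 S := fun _ _ => rfl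
  set S := SS t e (ext q b) with hSdef
  have hvS : Valid q S := SS_valid t he (ext q b)
  have hαdef : α = gc c0 S hvS := rfl
  set v := w.1 with hvdef
  have hcons : ∀ i, i + 1 ≤ 4*q+2 → S (i+1) ≠ S i := hvS.1
  have hfz := SS_frozen t e (ext q b) v (by omega)
  rw [← hSdef] at hfz
  rcases hfz with hL | hR
  · -- S v = S (v-2) : use triple (v-2, v-1, v+1)
    set U1 : Fin (4*q+4) := ⟨v-2, by omega⟩ with hU1
    set U2 : Fin (4*q+4) := ⟨v-1, by omega⟩ with hU2
    set U3 : Fin (4*q+4) := ⟨v+1, by omega⟩ with hU3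
    have e1 : U1.1 = v-2 := by rw [hU1]
    have e2 : U2.1 = v-1 := by rw [hU2]
    have e3 : U3.1 = v+1 := by rw [hU3]
    have c5 : α.1 U3 ≠ α.1 U1 := by
      show col q c0 S ⟨v+1, by omega⟩ ≠ col q c0 S ⟨v-2, by omega⟩
      apply col_ne_of_sum
      rw [show v+1 = (v-2)+3 by omega, sum3, show v-2+1 = v-1 by omega,
        show v-2+2 = v by omega, hL]
      exact add3_ne _ _ _ (nz_ne (S (v-1)))
    exact five_distinct hw hoth U1 U2 U3
      (α.2 w U1 (gadj (by omega)))
      (α.2 w U2 (gadj (by omega)))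
      (α.2 w U3 (gadj (by omega)))
      (α.2 U1 U2 (gadj (by omega)))
      c5.symm
      (α.2 U2 U3 (gadj (by omega)))
      (fun h => by have := congrArg Fin.val h; omega)
      (fun h => by have := congrArg Fin.val h; omega)
      (fun h => by have := congrArg Fin.val h; omega)
      (gadj (by omega)) (gadj (by omega)) (gadj (by omega))
  · -- S (v+1) = S (v-1) : use triple (v-1, v+1, v+2)
    set U1 : Fin (4*q+4) := ⟨v-1, by omega⟩ with hU1
    set U2 : Fin (4*q+4) := ⟨v+1, by omega⟩ with hU2
    set U3 : Fin (4*q+4) := ⟨v+2, by omega⟩ with hU3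
    have e1 : U1.1 = v-1 := by rw [hU1]
    have e2 : U2.1 = v+1 := by rw [hU2]
    have e3 : U3.1 = v+2 := by rw [hU3]
    have c5 : α.1 U3 ≠ α.1 U1 := by
      show col q c0 S ⟨v+2, by omega⟩ ≠ col q c0 S ⟨v-1, by omega⟩
      apply col_ne_of_sum
      rw [show v+2 = (v-1)+3 by omega, sum3, show v-1+1 = v by omega,
        show v-1+2 = v+1 by omega, hR]
      exact add3_ne _ _ _ (nz_ne (S v))
    exact five_distinct hw hoth U1 U2 U3
      (α.2 w U1 (gadj (by omega)))
      (α.2 w U2 (gadj (by omega)))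
      (α.2 w U3 (gadj (by omega)))
      (α.2 U1 U2 (gadj (by omega)))
      c5.symm
      (α.2 U2 U3 (gadj (by omega)))
      (fun h => by have := congrArg Fin.val h; omega)
      (fun h => by have := congrArg Fin.val h; omega)
      (fun h => by have := congrArg Fin.val h; omega)
      (gadj (by omega)) (gadj (by omega)) (gadj (by omega))

end S6

namespace S6

variable {q : ℕ}

lemma no_adj_mk_eq {V : Type*} {H : SimpleGraph V} {a b : V} (h : ∀ c, ¬ H.Adj a c)
    (he : H.connectedComponentMk a = H.connectedComponentMk b) : a = b := by
  have hr : H.Reachable a b := SimpleGraph.ConnectedComponent.eq.mp he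
  obtain ⟨w⟩ := hr
  cases w with
  | nil => rfl
  | cons h' p => exact absurd h' (h _)

lemma csg_reach {W : Type*} (G : SimpleGraph W) (k : ℕ) (T : Set W)
    {a b : {f : W → Fin k // IsColoring G k f}} (h : (colorGraph G k).Reachable a b) :
    (CSG G k T).Reachable (csgNode G k T a) (csgNode G k T b) := by
  obtain ⟨w⟩ := h
  induction w with
  | nil => exact SimpleGraph.Reachable.refl _
  | @cons u x y h' p ih =>
    refine SimpleGraph.Reachable.trans ?_ ih
    by_cases he : csgNode G k T u = csgNode G k T x
    · rw [he]
    · exact SimpleGraph.Adj.reachable (by exact ⟨he, u, x, rfl, rfl, h'⟩)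

def rK4 (q : ℕ) : {f : Fin (4*q+4) → Fin 4 // IsColoring (GIp (4*q+4)) 4 f} → (Fin 4 → Fin 4) :=
  fun α i => α.1 ⟨i.1, by omega⟩

lemma rK4_adj {α β : {f : Fin (4*q+4) → Fin 4 // IsColoring (GIp (4*q+4)) 4 f}}
    (h : (colorGraph (GIp (4*q+4)) 4).Adj α β) : rK4 q α = rK4 q β :=
  funext fun i => frozen4 h ⟨i.1, by omega⟩ i.2

noncomputable def rNode (q : ℕ) :
    CSGNode (GIp (4*q+4)) 4 (GIterm (4*q+4)) → (Fin 4 → Fin 4) :=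
  SimpleGraph.ConnectedComponent.lift (rK4 q) (by
    intro a b p hp
    clear hp
    induction p with
    | nil => rfl
    | cons h' p ih => exact (rK4_adj (show _ ∧ _ from h').1).trans ih)

noncomputable def rComp (q : ℕ) :
    (CSG (GIp (4*q+4)) 4 (GIterm (4*q+4))).ConnectedComponent → (Fin 4 → Fin 4) :=
  SimpleGraph.ConnectedComponent.lift (rNode q) (by
    intro a b p hp
    clear hp
    induction p with
    | nil => rfl
    | cons h' p ih =>
      refine Eq.trans ?_ ih
      obtain ⟨hne, x, y, hx, hy, hxy⟩ := h'
      rw [← hx, ← hy]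
      exact rK4_adj hxy)

lemma rComp_mk (γ : {f : Fin (4*q+4) → Fin 4 // IsColoring (GIp (4*q+4)) 4 f}) :
    rComp q ((CSG (GIp (4*q+4)) 4 (GIterm (4*q+4))).connectedComponentMk
      (csgNode (GIp (4*q+4)) 4 (GIterm (4*q+4)) γ)) = rK4 q γ := rfl

end S6

namespace S6

variable {q : ℕ}

lemma SS0 (t e : ZMod 3) (b : ℕ → Bool) : SS t e b 0 = t := by
  unfold SS; rw [Finset.sum_range_zero, add_zero]

lemma SS1 (t e : ZMod 3) (b : ℕ → Bool) : SS t e b 1 = t + e := by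
  unfold SS; rw [Finset.sum_range_one]; rfl

lemma SS2 (t e : ZMod 3) (b : ℕ → Bool) : SS t e b 2 = t := by
  unfold SS
  rw [Finset.sum_range_succ, Finset.sum_range_one]
  show t + (dd e b 1 + dd e b 2) = t
  have h1 : dd e b 1 = e := rfl
  have h2 : dd e b 2 = -e := rfl
  rw [h1, h2]; ring

lemma fam_inj_b (c0 : CCX) (t : ZMod 3) {e : ZMod 3} (he : e ≠ 0) (b b' : Fin q → Bool)
    (h : fam c0 t he b = fam c0 t he b') : b = b' := by
  have hcol : col q c0 (SS t e (ext q b)) = col q c0 (SS t e (ext q b')) :=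
    congrArg Subtype.val h
  have hSS := col_injS hcol
  funext j
  have hj4 : 4*j.1+4 ≤ 4*q+2 := by have := j.2; omega
  have h1 := hSS (4*j.1+3) (by omega)
  have h2 := hSS (4*j.1+4) (by omega)
  have e1 := SS_succ t e (ext q b) (4*j.1+3)
  have e2 := SS_succ t e (ext q b') (4*j.1+3)
  rw [show 4*j.1+3+1 = 4*j.1+4 by omega] at e1 e2
  rw [e1, e2, h1] at h2
  have hdd := add_left_cancel h2
  rw [show 4*j.1+4 = 3+(4*j.1+1) by omega, dd_pat, dd_pat] at hdd
  · have hb : ext q b j.1 = b j := by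
      unfold ext; rw [dif_pos j.2]
    have hb' : ext q b' j.1 = b' j := by
      unfold ext; rw [dif_pos j.2]
    rw [hb, hb'] at hdd
    cases hx : b j <;> cases hx' : b' j <;> rw [hx, hx'] at hdd <;> first
      | rfl
      | · exfalso
          revert hdd
          show pat e _ 1 = pat e _ 1 → False
          intro hdd
          apply neg_ne_self he
          first
            | exact hdd
            | exact hdd.symm
  · omega
  · omega

lemma fam_reach (c0 : CCX) (t : ZMod 3) {e : ZMod 3} (he : e ≠ 0) (b b' : Fin q → Bool) :
    (colorGraph (GIp (4*q+4)) 4).Reachable (fam c0 t he b) (fam c0 t he b') := by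
  apply reach_aux c0 (4*q+2)
  · intro l hl; omega
  · intro l hl
    have : l = 0 ∨ l = 1 ∨ l = 2 := by omega
    rcases this with rfl | rfl | rfl
    · rw [SS0, SS0]
    · rw [SS1, SS1]
    · rw [SS2, SS2]

lemma param_inj (c0 c0' : CCX) (t t' : ZMod 3) {e e' : ZMod 3} (he : e ≠ 0) (he' : e' ≠ 0)
    (b b' : Fin q → Bool)
    (h : rK4 q (fam c0 t he b) = rK4 q (fam c0' t' he' b')) :
    c0 = c0' ∧ t = t' ∧ e = e' := by
  have key : ∀ (d0 : CCX) (s : ZMod 3) (f : ZMod 3) (hf : f ≠ 0) (c : Fin q → Bool)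
      (i : ℕ) (hi : i < 4),
      rK4 q (fam d0 s hf c) ⟨i, by omega⟩ =
        phi (d0 + ∑ l ∈ Finset.range i, nz (SS s f (ext q c) l)) := fun _ _ _ _ _ _ _ => rfl
  have h0 := congrFun h (⟨0, by omega⟩ : Fin 4)
  rw [key c0 t e he b 0 (by omega), key c0' t' e' he' b' 0 (by omega)] at h0
  simp only [Finset.sum_range_zero, add_zero] at h0
  have hc0 : c0 = c0' := phi.injective h0
  have h1 := congrFun h (⟨1, by omega⟩ : Fin 4)
  rw [key c0 t e he b 1 (by omega), key c0' t' e' he' b' 1 (by omega)] at h1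
  simp only [Finset.sum_range_one] at h1
  rw [SS0, SS0, hc0] at h1
  have ht : t = t' := nz_inj (add_left_cancel (phi.injective h1))
  have hsum : ∀ (s f : ZMod 3) (c : ℕ → Bool),
      (∑ l ∈ Finset.range 3, nz (SS s f c l)) = nz s + nz (s+f) + nz s := by
    intro s f c
    rw [Finset.sum_range_succ (fun l => nz (SS s f c l)) 2,
      Finset.sum_range_succ (fun l => nz (SS s f c l)) 1,
      Finset.sum_range_one, SS0, SS1, SS2]
  have h3 := congrFun h (⟨3, by omega⟩ : Fin 4)
  rw [key c0 t e he b 3 (by omega), key c0' t' e' he' b' 3 (by omega), hsum, hsum,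
    add_add_self', add_add_self', hc0, ht] at h3
  have := nz_inj (add_left_cancel (phi.injective h3))
  exact ⟨hc0, ht, add_left_cancel this⟩

end S6

namespace S6

variable {q : ℕ}

abbrev Param : Type := CCX × ZMod 3 × {e : ZMod 3 // e ≠ 0}

noncomputable def famP (q : ℕ) (P : Param) (b : Fin q → Bool) :
    {f : Fin (4*q+4) → Fin 4 // IsColoring (GIp (4*q+4)) 4 f} :=
  fam P.1 P.2.1 P.2.2.2 b

noncomputable def nodeP (q : ℕ) (P : Param) (b : Fin q → Bool) :
    CSGNode (GIp (4*q+4)) 4 (GIterm (4*q+4)) :=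
  csgNode (GIp (4*q+4)) 4 (GIterm (4*q+4)) (famP q P b)

noncomputable def compP (q : ℕ) (P : Param) :
    (CSG (GIp (4*q+4)) 4 (GIterm (4*q+4))).ConnectedComponent :=
  (CSG (GIp (4*q+4)) 4 (GIterm (4*q+4))).connectedComponentMk (nodeP q P (fun _ => false))

lemma nodeP_inj (P : Param) : Function.Injective (nodeP q P) := by
  intro b b' h
  have hcoleq : famP q P b = famP q P b' :=
    no_adj_mk_eq (fun c hc => fam_no_nbr P.1 P.2.1 P.2.2.2 b c hc) h
  exact fam_inj_b P.1 P.2.1 P.2.2.2 b b' hcoleq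

lemma nodeP_comp (P : Param) (b : Fin q → Bool) :
    (CSG (GIp (4*q+4)) 4 (GIterm (4*q+4))).connectedComponentMk (nodeP q P b) = compP q P := by
  apply SimpleGraph.ConnectedComponent.sound
  exact csg_reach _ _ _ (fam_reach P.1 P.2.1 P.2.2.2 b (fun _ => false))

lemma inner_bound (P : Param) :
    2 ^ q ≤ {x : CSGNode (GIp (4*q+4)) 4 (GIterm (4*q+4)) |
      (CSG (GIp (4*q+4)) 4 (GIterm (4*q+4))).connectedComponentMk x = compP q P}.ncard := by
  have hsub : Set.range (nodeP q P) ⊆ {x : CSGNode (GIp (4*q+4)) 4 (GIterm (4*q+4)) |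
      (CSG (GIp (4*q+4)) 4 (GIterm (4*q+4))).connectedComponentMk x = compP q P} := by
    rintro x ⟨b, rfl⟩
    exact nodeP_comp P b
  calc 2 ^ q = Nat.card (Fin q → Bool) := by
        rw [Nat.card_eq_fintype_card, Fintype.card_fun, Fintype.card_bool, Fintype.card_fin]
    _ = Nat.card (Set.range (nodeP q P)) := (Nat.card_range_of_injective (nodeP_inj P)).symm
    _ = (Set.range (nodeP q P)).ncard := Nat.card_coe_set_eq _
    _ ≤ _ := Set.ncard_le_ncard hsub (Set.toFinite _)

lemma compP_inj : Function.Injective (compP (q := q)) := by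
  intro P P' h
  have h2 : rComp q (compP q P) = rComp q (compP q P') := congrArg _ h
  simp only [compP, nodeP, famP, rComp_mk] at h2
  obtain ⟨hc0, ht, he⟩ := param_inj P.1 P'.1 P.2.1 P'.2.1 P.2.2.2 P'.2.2.2 _ _ h2
  exact Prod.ext hc0 (Prod.ext ht (Subtype.ext he))

lemma card_param : Nat.card Param = 24 := by
  rw [Nat.card_eq_fintype_card]
  decide

lemma main_aux (q : ℕ) :
    24 ≤ {c : (CSG (GIp (4*q+4)) 4 (GIterm (4*q+4))).ConnectedComponent |
      2 ^ q ≤ {x : CSGNode (GIp (4*q+4)) 4 (GIterm (4*q+4)) |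
        (CSG (GIp (4*q+4)) 4 (GIterm (4*q+4))).connectedComponentMk x = c}.ncard}.ncard := by
  have hsub : Set.range (compP q) ⊆ {c : (CSG (GIp (4*q+4)) 4 (GIterm (4*q+4))).ConnectedComponent |
      2 ^ q ≤ {x : CSGNode (GIp (4*q+4)) 4 (GIterm (4*q+4)) |
        (CSG (GIp (4*q+4)) 4 (GIterm (4*q+4))).connectedComponentMk x = c}.ncard} := by
    rintro c ⟨P, rfl⟩
    exact inner_bound P
  calc (24:ℕ) = Nat.card Param := card_param.symm
    _ = Nat.card (Set.range (compP (q := q))) := (Nat.card_range_of_injective compP_inj).symm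
    _ = (Set.range (compP (q := q))).ncard := Nat.card_coe_set_eq _
    _ ≤ _ := Set.ncard_le_ncard hsub (Set.toFinite _)

end S6


/-- for `p = 4q+4`, the contracted solution graph
`C^c_4(G^I_p, {v_{p-2}, v_{p-1}})` has at least `4! = 24` connected components
that each contain at least `2^q` nodes. -/
theorem statement_6 (q p : ℕ) (hp : p = 4 * q + 4) :
    24 ≤ {c : (CSG (GIp p) 4 (GIterm p)).ConnectedComponent |
      2 ^ q ≤ {x : CSGNode (GIp p) 4 (GIterm p) |
        (CSG (GIp p) 4 (GIterm p)).connectedComponentMk x = c}.ncard}.ncard := by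
  subst hp
  exact S6.main_aux q
end

section
/- Let k ≥ 3, let G = (V,E) be a (k−2)-connected k-colorable chordal graph, and let T be a clique of G with T ≠ V such that (G,T) can be obtained from (G−v, T∖{v}) by an introduce operation. If C^c_k(G−v, T∖{v}) is a (k−2,k)-color-complete graph, then C^c_k(G,T) is a (k−1,k)-color-complete graph. If |T| = k, or C^c_k(G−v, T∖{v}) is a forest that satisfies the injective neighborhood property, then C^c_k(G,T) is a forest that satisfies the injective neighborhood property. -/
open SimpleGraph

/-- The vertex set of `G - v`. -/
def delSet {V : Type*} (v : V) : Set V := {u | u ≠ v}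

/-- The terminal set `T \ {v}`, viewed as a set of vertices of `G - v`. -/
def Tdel {V : Type*} (T : Set V) (v : V) : Set ↥(delSet v) := {u | u.1 ∈ T}

set_option linter.unusedSectionVars false


open SimpleGraph Walk

namespace CSGAux

variable {N N' : Type*} {H : SimpleGraph N} {F : SimpleGraph N'} {π : N → N'}

lemma path_edge_ends {a b : N'} {p : F.Walk a b} (hp : p.IsPath)
    (he : s(a, b) ∈ p.edges) : ∃ (e : F.Adj a b), p = Walk.cons e Walk.nil := by
  cases p with
  | nil => simp at he
  | @cons _ c _ h' p' =>
    rw [Walk.edges_cons, List.mem_cons] at he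
    rcases he with he | he
    · have hbc : b = c := Sym2.congr_right.mp he
      subst hbc
      have : p' = Walk.nil := by
        have := SimpleGraph.Path.loop_eq ⟨p', hp.of_cons⟩
        exact congrArg Subtype.val this
      exact ⟨h', by rw [this]⟩
    · exact absurd (Walk.fst_mem_support_of_mem_edges p' he)
        ((Walk.cons_isPath_iff h' p').mp hp).2

variable (π) in
/-- Projection of a walk, collapsing "vertical" steps. -/
noncomputable def proj (hA : ∀ x y, H.Adj x y → π x = π y ∨ F.Adj (π x) (π y)) :
    ∀ {x y : N}, H.Walk x y → F.Walk (π x) (π y)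
  | _, _, .nil => .nil
  | x, _, .cons (v := x₁) h p =>
    haveI := Classical.dec (π x = π x₁)
    if he : π x = π x₁ then (proj hA p).copy he.symm rfl
    else .cons ((hA x x₁ h).resolve_left he) (proj hA p)

variable {hA : ∀ x y, H.Adj x y → π x = π y ∨ F.Adj (π x) (π y)}

lemma proj_cons_eq {x x₁ y : N} (h : H.Adj x x₁) (p : H.Walk x₁ y) (he : π x = π x₁) :
    proj π hA (.cons h p) = (proj π hA p).copy he.symm rfl := by
  rw [proj]
  simp [he]

lemma proj_cons_ne {x x₁ y : N} (h : H.Adj x x₁) (p : H.Walk x₁ y) (he : ¬ π x = π x₁) :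
    proj π hA (.cons h p) = .cons ((hA x x₁ h).resolve_left he) (proj π hA p) := by
  rw [proj]
  simp [he]

lemma proj_length_zero {x y : N} (p : H.Walk x y) (h0 : (proj π hA p).length = 0) :
    ∀ u ∈ p.support, π u = π x := by
  induction p with
  | nil => intro u hu; simp at hu; rw [hu]
  | @cons x x₁ y h p ih =>
    intro u hu
    by_cases he : π x = π x₁
    · rw [proj_cons_eq h p he, Walk.length_copy] at h0
      rw [Walk.support_cons, List.mem_cons] at hu
      rcases hu with rfl | hu
      · rfl
      · rw [ih h0 u hu, he]
    · rw [proj_cons_ne h p he] at h0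
      simp at h0

lemma proj_darts_lift {x y : N} (p : H.Walk x y) :
    ∀ d ∈ (proj π hA p).darts, ∃ d' ∈ p.darts, π d'.fst = d.fst ∧ π d'.snd = d.snd := by
  induction p with
  | nil => intro d hd; rw [proj] at hd; simp at hd
  | @cons x x₁ y h p ih =>
    intro d hd
    by_cases he : π x = π x₁
    · rw [proj_cons_eq h p he, Walk.darts_copy] at hd
      obtain ⟨d', hd', h1, h2⟩ := ih d hd
      exact ⟨d', by simp [Walk.darts_cons, hd'], h1, h2⟩
    · rw [proj_cons_ne h p he, Walk.darts_cons] at hd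
      rcases List.mem_cons.mp hd with rfl | hd
      · exact ⟨⟨(x, x₁), h⟩, by simp [Walk.darts_cons], rfl, rfl⟩
      · obtain ⟨d', hd', h1, h2⟩ := ih d hd
        exact ⟨d', by simp [Walk.darts_cons, hd'], h1, h2⟩

lemma proj_isPath (hA : ∀ x y, H.Adj x y → π x = π y ∨ F.Adj (π x) (π y)) (hF : F.IsAcyclic)
    (hC : ∀ x y x' y' : N, H.Adj x y → H.Adj x' y' → π x = π x' → π y = π y' →
      π x ≠ π y → x = x' ∧ y = y')
    {x y : N} (p : H.Walk x y) (hp : p.IsPath) : (proj π hA p).IsPath := by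
  classical
  induction p with
  | nil => rw [proj]; exact Walk.IsPath.nil
  | @cons x x₁ y h p ih =>
    have hp' : p.IsPath := hp.of_cons
    have hxs : x ∉ p.support := ((Walk.cons_isPath_iff h p).mp hp).2
    have ihp := ih hp'
    by_cases he : π x = π x₁
    · rw [proj_cons_eq h p he]
      rwa [Walk.isPath_copy]
    · rw [proj_cons_ne h p he]
      rw [Walk.cons_isPath_iff]
      refine ⟨ihp, fun hmem => ?_⟩
      set p1 := (proj π hA p).takeUntil (π x) hmem with hp1def
      have hp1 : p1.IsPath := ihp.takeUntil hmem
      by_cases hedge : s(π x₁, π x) ∈ p1.edges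
      · obtain ⟨e1, he1⟩ := path_edge_ends hp1 hedge
        have hdarts : (proj π hA p).darts
            = p1.darts ++ ((proj π hA p).dropUntil (π x) hmem).darts := by
          conv_lhs => rw [← (proj π hA p).take_spec hmem]
          rw [Walk.darts_append, hp1def]
        have hd : (⟨(π x₁, π x), e1⟩ : F.Dart) ∈ (proj π hA p).darts := by
          rw [hdarts, he1]
          simp
        obtain ⟨d', hd', h1, h2⟩ := proj_darts_lift p _ hd
        obtain ⟨hfst, hsnd⟩ := hC d'.fst d'.snd x₁ x d'.adj h.symm h1 h2
          (by rw [h1, h2]; exact fun hh => he hh.symm)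
        exact hxs (hsnd ▸ Walk.dart_snd_mem_support_of_mem_darts p hd')
      · have hcyc : (Walk.cons ((hA x x₁ h).resolve_left he) p1).IsCycle := by
          rw [Walk.cons_isCycle_iff]
          exact ⟨hp1, by rw [Sym2.eq_swap]; exact hedge⟩
        exact hF _ hcyc

theorem abstract_acyclic (hA : ∀ x y, H.Adj x y → π x = π y ∨ F.Adj (π x) (π y)) (hF : F.IsAcyclic)
    (hB : ∀ x y z : N, π x = π y → π x = π z → x = y ∨ x = z ∨ y = z)
    (hC : ∀ x y x' y' : N, H.Adj x y → H.Adj x' y' → π x = π x' → π y = π y' →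
      π x ≠ π y → x = x' ∧ y = y') : H.IsAcyclic := by
  classical
  intro x c hc
  cases c with
  | nil => exact hc.ne_nil rfl
  | @cons _ x₁ _ h q =>
    obtain ⟨hq, hedge_not⟩ := (Walk.cons_isCycle_iff q h).mp hc
    by_cases he : π x = π x₁
    · -- vertical first step: whole cycle is in one fiber
      have hproj := proj_isPath hA hF hC q hq
      have h0 : (proj π hA q).length = 0 := by
        have hcl : ((proj π hA q).copy rfl he).IsPath := by rwa [Walk.isPath_copy]
        have : (proj π hA q).copy rfl he = Walk.nil := by
          have := SimpleGraph.Path.loop_eq ⟨_, hcl⟩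
          exact congrArg Subtype.val this
        have := congrArg Walk.length this
        rwa [Walk.length_copy, Walk.length_nil] at this
      have hconst := proj_length_zero (hA := hA) q h0
      have h3 : 3 ≤ (Walk.cons h q).length := hc.three_le_length
      rw [Walk.length_cons] at h3
      have hlen : 3 ≤ q.support.length := by rw [Walk.length_support]; omega
      have hnd : q.support.Nodup := hq.support_nodup
      obtain ⟨u1, u2, u3, rest, hs⟩ : ∃ u1 u2 u3 rest, q.support = u1 :: u2 :: u3 :: rest := by
        rcases hsup : q.support with _ | ⟨a, _ | ⟨b, _ | ⟨c, l⟩⟩⟩ <;>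
          simp [hsup] at hlen ⊢
      have m1 : u1 ∈ q.support := by rw [hs]; simp
      have m2 : u2 ∈ q.support := by rw [hs]; simp
      have m3 : u3 ∈ q.support := by rw [hs]; simp
      rw [hs] at hnd
      simp only [List.nodup_cons, List.mem_cons] at hnd
      have e12 : π u1 = π u2 := by rw [hconst u1 m1, hconst u2 m2]
      have e13 : π u1 = π u3 := by rw [hconst u1 m1, hconst u3 m3]
      rcases hB u1 u2 u3 e12 e13 with h' | h' | h'
      · exact hnd.1 (by rw [h']; simp)
      · exact hnd.1 (by rw [h']; simp)
      · exact hnd.2.1 (by rw [h']; simp)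
    · have e := (hA x x₁ h).resolve_left he
      have hproj := proj_isPath hA hF hC q hq
      by_cases hedge : s(π x₁, π x) ∈ (proj π hA q).edges
      · obtain ⟨e1, he1⟩ := path_edge_ends hproj hedge
        have hd : (⟨(π x₁, π x), e1⟩ : F.Dart) ∈ (proj π hA q).darts := by
          rw [he1]; simp
        obtain ⟨d', hd', h1, h2⟩ := proj_darts_lift q _ hd
        obtain ⟨hfst, hsnd⟩ := hC d'.fst d'.snd x₁ x d'.adj h.symm h1 h2
          (by rw [h1, h2]; exact fun hh => he hh.symm)
        apply hedge_not
        have : d'.edge ∈ q.edges := List.mem_map_of_mem hd'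
        have hde : d'.edge = s(x₁, x) := by
          rw [Sym2.eq_swap]
          show s(d'.fst, d'.snd) = s(x, x₁)
          rw [hfst, hsnd, Sym2.eq_swap]
        rw [hde, Sym2.eq_swap] at this
        exact this
      · exact hF _ ((Walk.cons_isCycle_iff (proj π hA q) e).mpr
          ⟨hproj, by rw [Sym2.eq_swap]; exact hedge⟩)

end CSGAux
section Ground

variable {V : Type} [Fintype V] [DecidableEq V] {G : SimpleGraph V} {k : ℕ} {T : Set V} {v : V}

lemma mem_delSet {u : V} (h : u ≠ v) : u ∈ delSet v := h

lemma adj_v (hT : G.IsClique T) (hv : v ∈ T) (hN : ∀ u, G.Adj v u → u ∈ T) {u : V} :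
    G.Adj v u ↔ u ∈ T ∧ u ≠ v :=
  ⟨fun h => ⟨hN u h, (G.ne_of_adj h).symm⟩, fun h => hT hv h.1 (Ne.symm h.2)⟩

/-- Extend a function on `V ∖ {v}` by the value `c` at `v`. -/
def extFun (v : V) (β : ↥(delSet v) → Fin k) (c : Fin k) : V → Fin k :=
  fun u => if h : u = v then c else β ⟨u, h⟩

@[simp] lemma extFun_v (β : ↥(delSet v) → Fin k) (c : Fin k) : extFun v β c v = c :=
  dif_pos rfl

lemma extFun_ne (β : ↥(delSet v) → Fin k) (c : Fin k) {u : V} (h : u ≠ v) :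
    extFun v β c u = β ⟨u, h⟩ := dif_neg h

/-- `c` is a valid color for `v` given a coloring `β` of `G - v`. -/
def ValidC (T : Set V) (β : ↥(delSet v) → Fin k) (c : Fin k) : Prop :=
  ∀ u : ↥(delSet v), u.1 ∈ T → β u ≠ c

lemma extFun_isColoring (hN : ∀ u, G.Adj v u → u ∈ T)
    {β : ↥(delSet v) → Fin k} (hβ : IsColoring (G.induce (delSet v)) k β)
    {c : Fin k} (hc : ValidC T β c) : IsColoring G k (extFun v β c) := by
  intro u1 u2 hadj
  unfold extFun
  by_cases h1 : u1 = v <;> by_cases h2 : u2 = v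
  · exact absurd (h1.trans h2.symm) (G.ne_of_adj hadj)
  · rw [dif_pos h1, dif_neg h2]
    exact (hc ⟨u2, h2⟩ (hN u2 (h1 ▸ hadj))).symm
  · rw [dif_neg h1, dif_pos h2]
    exact hc ⟨u1, h1⟩ (hN u1 (h2 ▸ hadj).symm)
  · rw [dif_neg h1, dif_neg h2]
    exact hβ ⟨u1, h1⟩ ⟨u2, h2⟩ hadj

/-- Extension of a proper coloring of `G - v` to a proper coloring of `G`. -/
def extC (hN : ∀ u, G.Adj v u → u ∈ T)
    (β : {α : ↥(delSet v) → Fin k // IsColoring (G.induce (delSet v)) k α})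
    (c : Fin k) (hc : ValidC T β.1 c) : {α : V → Fin k // IsColoring G k α} :=
  ⟨extFun v β.1 c, extFun_isColoring hN β.2 hc⟩

lemma extC_res (hN : ∀ u, G.Adj v u → u ∈ T) (γ : {α : V → Fin k // IsColoring G k α})
    (hc : ValidC T (restrictColoring G k (delSet v) γ).1 (γ.1 v)) :
    extC hN (restrictColoring G k (delSet v) γ) (γ.1 v) hc = γ := by
  apply Subtype.ext
  funext u
  by_cases h : u = v
  · subst h; exact extFun_v _ _
  · exact extFun_ne _ _ h

lemma valid_res (hT : G.IsClique T) (hv : v ∈ T) (hN : ∀ u, G.Adj v u → u ∈ T)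
    (γ : {α : V → Fin k // IsColoring G k α}) :
    ValidC T (restrictColoring G k (delSet v) γ).1 (γ.1 v) := by
  intro u hu
  exact fun h => γ.2 v u.1 ((adj_v hT hv hN).mpr ⟨hu, u.2⟩) h.symm

end Ground
section Ground2

variable {V : Type} [Fintype V] [DecidableEq V] {G : SimpleGraph V} {k : ℕ} {T : Set V} {v : V}

lemma SL_adj_res (hv : v ∈ T)
    {γ δ : {α : V → Fin k // IsColoring G k α}}
    (h : (sameLabelSub (colorGraph G k) (csgLabelFun G k T)).Adj γ δ) :
    γ.1 v = δ.1 v ∧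
      (sameLabelSub (colorGraph (G.induce (delSet v)) k)
        (csgLabelFun (G.induce (delSet v)) k (Tdel T v))).Adj
        (restrictColoring G k (delSet v) γ) (restrictColoring G k (delSet v) δ) := by
  obtain ⟨⟨w, hw, huniq⟩, hlab⟩ := h
  have hvv : γ.1 v = δ.1 v := congrFun hlab ⟨v, hv⟩
  have hwT : w ∉ T := fun hwT => hw (congrFun hlab ⟨w, hwT⟩)
  have hwv : w ≠ v := fun h => hwT (h ▸ hv)
  refine ⟨hvv, ⟨⟨w, hwv⟩, hw, ?_⟩, ?_⟩
  · intro u hu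
    exact Subtype.ext (huniq u.1 hu)
  · funext t
    exact congrFun hlab ⟨t.1.1, t.2⟩

lemma valid_of_SL'_adj
    {β1 β2 : {α : ↥(delSet v) → Fin k // IsColoring (G.induce (delSet v)) k α}}
    (h : (sameLabelSub (colorGraph (G.induce (delSet v)) k)
      (csgLabelFun (G.induce (delSet v)) k (Tdel T v))).Adj β1 β2)
    {c : Fin k} (h1 : ValidC T β1.1 c) : ValidC T β2.1 c := by
  intro u hu hc
  exact h1 u hu ((congrFun h.2 ⟨u, hu⟩).trans hc)

lemma SL_adj_ext (hN : ∀ u, G.Adj v u → u ∈ T)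
    {β1 β2 : {α : ↥(delSet v) → Fin k // IsColoring (G.induce (delSet v)) k α}}
    (h : (sameLabelSub (colorGraph (G.induce (delSet v)) k)
      (csgLabelFun (G.induce (delSet v)) k (Tdel T v))).Adj β1 β2)
    (c : Fin k) (h1 : ValidC T β1.1 c) (h2 : ValidC T β2.1 c) :
    (sameLabelSub (colorGraph G k) (csgLabelFun G k T)).Adj
      (extC hN β1 c h1) (extC hN β2 c h2) := by
  obtain ⟨⟨u, hu, huniq⟩, hlab⟩ := h
  constructor
  · refine ⟨u.1, ?_, ?_⟩
    · show extFun v β1.1 c u.1 ≠ extFun v β2.1 c u.1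
      rw [extFun_ne _ _ u.2, extFun_ne _ _ u.2]
      exact hu
    · intro w hw
      by_cases hwv : w = v
      · exfalso
        apply hw
        show extFun v β1.1 c w = extFun v β2.1 c w
        rw [hwv, extFun_v, extFun_v]
      · have hne : β1.1 ⟨w, hwv⟩ ≠ β2.1 ⟨w, hwv⟩ := by
          have : extFun v β1.1 c w ≠ extFun v β2.1 c w := hw
          rwa [extFun_ne _ _ hwv, extFun_ne _ _ hwv] at this
        exact congrArg Subtype.val (huniq ⟨w, hwv⟩ hne)
  · funext t
    show extFun v β1.1 c t.1 = extFun v β2.1 c t.1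
    by_cases htv : (t : V) = v
    · rw [htv, extFun_v, extFun_v]
    · rw [extFun_ne _ _ htv, extFun_ne _ _ htv]
      exact congrFun hlab ⟨⟨t.1, htv⟩, t.2⟩

lemma SL_reach_res (hv : v ∈ T)
    {γ δ : {α : V → Fin k // IsColoring G k α}}
    (h : (sameLabelSub (colorGraph G k) (csgLabelFun G k T)).Reachable γ δ) :
    γ.1 v = δ.1 v ∧
      (sameLabelSub (colorGraph (G.induce (delSet v)) k)
        (csgLabelFun (G.induce (delSet v)) k (Tdel T v))).Reachable
        (restrictColoring G k (delSet v) γ) (restrictColoring G k (delSet v) δ) := by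
  obtain ⟨p⟩ := h
  induction p with
  | nil => exact ⟨rfl, SimpleGraph.Reachable.refl _⟩
  | cons h p ih =>
    obtain ⟨h1, h2⟩ := SL_adj_res hv h
    obtain ⟨ih1, ih2⟩ := ih
    exact ⟨h1.trans ih1, h2.reachable.trans ih2⟩

lemma SL_reach_ext (hN : ∀ u, G.Adj v u → u ∈ T)
    {β1 β2 : {α : ↥(delSet v) → Fin k // IsColoring (G.induce (delSet v)) k α}}
    (h : (sameLabelSub (colorGraph (G.induce (delSet v)) k)
      (csgLabelFun (G.induce (delSet v)) k (Tdel T v))).Reachable β1 β2)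
    (c : Fin k) :
    ∀ (h1 : ValidC T β1.1 c) (h2 : ValidC T β2.1 c),
    (sameLabelSub (colorGraph G k) (csgLabelFun G k T)).Reachable
      (extC hN β1 c h1) (extC hN β2 c h2) := by
  obtain ⟨p⟩ := h
  suffices H : ∀ (a b : {α : ↥(delSet v) → Fin k // IsColoring (G.induce (delSet v)) k α})
      (p : (sameLabelSub (colorGraph (G.induce (delSet v)) k)
        (csgLabelFun (G.induce (delSet v)) k (Tdel T v))).Walk a b)
      (ha : ValidC T a.1 c) (hb : ValidC T b.1 c),
      (sameLabelSub (colorGraph G k) (csgLabelFun G k T)).Reachable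
        (extC hN a c ha) (extC hN b c hb) by
    intro h1 h2
    exact H _ _ p h1 h2
  intro a b p
  induction p with
  | nil => intro ha hb; exact SimpleGraph.Reachable.refl _
  | @cons a b b2 hadj p ih =>
    intro ha hb
    have hmid : ValidC T b.1 c := valid_of_SL'_adj hadj ha
    exact ((SL_adj_ext hN hadj c ha hmid).reachable).trans (ih hmid hb)

end Ground2
section Ground3

variable {V : Type} [Fintype V] [DecidableEq V] {G : SimpleGraph V} {k : ℕ} {T : Set V} {v : V}

/-- The projection of the contracted solution graph of `(G,T)` to that of `(G-v, T∖v)`. -/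
def resNode (hv : v ∈ T) : CSGNode G k T → CSGNode (G.induce (delSet v)) k (Tdel T v) :=
  SimpleGraph.ConnectedComponent.lift
    (fun γ => csgNode (G.induce (delSet v)) k (Tdel T v) (restrictColoring G k (delSet v) γ))
    (by
      intro γ δ p hp
      clear hp
      induction p with
      | nil => rfl
      | cons h p ih =>
        exact (SimpleGraph.ConnectedComponent.connectedComponentMk_eq_of_adj (SL_adj_res hv h).2).trans ih)

@[simp] lemma resNode_mk (hv : v ∈ T) (γ : {α : V → Fin k // IsColoring G k α}) :
    resNode hv (csgNode G k T γ)
      = csgNode (G.induce (delSet v)) k (Tdel T v) (restrictColoring G k (delSet v) γ) := rfl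

/-- The color of `v` in a node of the contracted solution graph. -/
def vcolNode (hv : v ∈ T) : CSGNode G k T → Fin k := fun x => csgLabel G k T x ⟨v, hv⟩

@[simp] lemma vcolNode_mk (hv : v ∈ T) (γ : {α : V → Fin k // IsColoring G k α}) :
    vcolNode hv (csgNode G k T γ) = γ.1 v := rfl

@[simp] lemma csgLabel_mk (γ : {α : V → Fin k // IsColoring G k α}) :
    csgLabel G k T (csgNode G k T γ) = csgLabelFun G k T γ := rfl

lemma node_eq_of (hT : G.IsClique T) (hv : v ∈ T) (hN : ∀ u, G.Adj v u → u ∈ T)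
    {x y : CSGNode G k T} (h1 : resNode hv x = resNode hv y)
    (h2 : vcolNode hv x = vcolNode hv y) : x = y := by
  obtain ⟨γ, rfl⟩ := x.exists_rep
  obtain ⟨δ, rfl⟩ := y.exists_rep
  have hreach := SimpleGraph.ConnectedComponent.exact h1
  have hcv : γ.1 v = δ.1 v := h2
  have hvg := valid_res hT hv hN γ
  have hvd : ValidC T (restrictColoring G k (delSet v) δ).1 (γ.1 v) := by
    rw [hcv]; exact valid_res hT hv hN δ
  have := SL_reach_ext hN hreach (γ.1 v) hvg hvd
  rw [extC_res hN γ hvg] at this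
  have hgen : ∀ c (hc : ValidC T (restrictColoring G k (delSet v) δ).1 c), c = δ.1 v →
      extC hN (restrictColoring G k (delSet v) δ) c hc = δ := by
    rintro c hc rfl
    exact extC_res hN δ hc
  have hd := hgen (γ.1 v) hvd hcv
  rw [hd] at this
  exact SimpleGraph.ConnectedComponent.sound this

lemma vcol_not_range (hT : G.IsClique T) (hv : v ∈ T) (hN : ∀ u, G.Adj v u → u ∈ T)
    (x : CSGNode G k T) (u : ↥(delSet v)) (hu : u.1 ∈ T) :
    csgLabel (G.induce (delSet v)) k (Tdel T v) (resNode hv x) ⟨u, hu⟩ ≠ vcolNode hv x := by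
  obtain ⟨γ, rfl⟩ := x.exists_rep
  exact fun h => γ.2 v u.1 ((adj_v hT hv hN).mpr ⟨hu, u.2⟩) (h.symm)

/-- Generic: labels of a node of a contracted solution graph, restricted to a clique,
are injective. -/
lemma label_injective {W : Type*} {G : SimpleGraph W} {k : ℕ} {T : Set W}
    (hT : G.IsClique T) (x : CSGNode G k T) : Function.Injective (csgLabel G k T x) := by
  obtain ⟨γ, rfl⟩ := x.exists_rep
  intro t1 t2 h
  by_contra hne
  have hne' : (t1 : W) ≠ (t2 : W) := fun h' => hne (Subtype.ext h')
  exact γ.2 t1.1 t2.1 (hT t1.2 t2.2 hne') h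

/-- Generic: adjacent nodes of a contracted solution graph have labels differing in
exactly one element. -/
lemma adj_unique_diff {W : Type*} {G : SimpleGraph W} {k : ℕ} {T : Set W}
    {x y : CSGNode G k T} (h : (CSG G k T).Adj x y) :
    ∃! t : ↥T, csgLabel G k T x t ≠ csgLabel G k T y t := by
  obtain ⟨hne, γ, δ, rfl, rfl, hadj⟩ := h
  obtain ⟨w, hw, huniq⟩ := hadj
  by_cases hwT : w ∈ T
  · exact ⟨⟨w, hwT⟩, hw, fun t ht => Subtype.ext (huniq t.1 ht)⟩
  · exfalso
    apply hne
    apply SimpleGraph.ConnectedComponent.connectedComponentMk_eq_of_adj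
    refine ⟨⟨w, hw, huniq⟩, ?_⟩
    funext t
    by_contra ht
    exact hwT ((huniq t.1 ht) ▸ t.2)

lemma adj_cases (hT : G.IsClique T) (hv : v ∈ T) (hN : ∀ u, G.Adj v u → u ∈ T)
    {x y : CSGNode G k T} (h : (CSG G k T).Adj x y) :
    (resNode hv x = resNode hv y ∧ vcolNode hv x ≠ vcolNode hv y) ∨
      ((CSG (G.induce (delSet v)) k (Tdel T v)).Adj (resNode hv x) (resNode hv y) ∧
        vcolNode hv x = vcolNode hv y) := by
  obtain ⟨hne, γ, δ, rfl, rfl, hadj⟩ := h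
  obtain ⟨w, hw, huniq⟩ := hadj
  by_cases hwv : w = v
  · left
    have hres : restrictColoring G k (delSet v) γ = restrictColoring G k (delSet v) δ := by
      apply Subtype.ext
      funext u
      by_contra hu
      exact u.2 ((huniq u.1 hu).trans hwv)
    constructor
    · exact congrArg (csgNode (G.induce (delSet v)) k (Tdel T v)) hres
    · show γ.1 v ≠ δ.1 v
      rw [← hwv]; exact hw
  · right
    have hvv : γ.1 v = δ.1 v := by
      by_contra hvv
      exact hwv ((huniq v hvv).symm)
    refine ⟨?_, hvv⟩
    have hwT : w ∈ T := by
      by_contra hwT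
      apply hne
      apply SimpleGraph.ConnectedComponent.connectedComponentMk_eq_of_adj
      refine ⟨⟨w, hw, huniq⟩, ?_⟩
      funext t
      by_contra ht
      exact hwT ((huniq t.1 ht) ▸ t.2)
    constructor
    · intro heq
      have := congrFun (congrArg (csgLabel (G.induce (delSet v)) k (Tdel T v)) heq)
        ⟨⟨w, hwv⟩, hwT⟩
      exact hw this
    · refine ⟨restrictColoring G k (delSet v) γ, restrictColoring G k (delSet v) δ,
        rfl, rfl, ⟨⟨w, hwv⟩, hw, ?_⟩⟩
      intro u hu
      exact Subtype.ext (huniq u.1 hu)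

end Ground3
section Ground4

variable {V : Type} [Fintype V] [DecidableEq V] {G : SimpleGraph V} {k : ℕ} {T : Set V} {v : V}

lemma ncard_range_inj {W : Type} {S : Set W} {f : ↥S → Fin k} (hf : Function.Injective f) :
    (Set.range f).ncard = S.ncard := by
  rw [← Set.image_univ, Set.ncard_image_of_injective _ hf, Set.ncard_univ,
    Nat.card_coe_set_eq]

lemma ncard_le_k (A : Set (Fin k)) : A.ncard ≤ k := by
  refine le_trans (Set.ncard_le_ncard (Set.subset_univ A) Set.finite_univ) ?_
  simp [Set.ncard_univ]

lemma three_not_mem {W : Type} {S : Set W} {f : ↥S → Fin k} (hf : Function.Injective f)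
    (hS : S.ncard = k - 2) (hk : 3 ≤ k) {a b c : Fin k}
    (ha : a ∉ Set.range f) (hb : b ∉ Set.range f) (hc : c ∉ Set.range f)
    (hab : a ≠ b) (hac : a ≠ c) : b = c := by
  by_contra hbc
  have h1 : c ∉ Set.range f := hc
  have h2 : b ∉ insert c (Set.range f) := by simp [hbc, hb]
  have h3 : a ∉ insert b (insert c (Set.range f)) := by simp [hab, hac, ha]
  have hcard : (insert a (insert b (insert c (Set.range f)))).ncard = k + 1 := by
    rw [Set.ncard_insert_of_notMem h3 (Set.toFinite _),
      Set.ncard_insert_of_notMem h2 (Set.toFinite _),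
      Set.ncard_insert_of_notMem h1 (Set.toFinite _),
      ncard_range_inj hf, hS]
    omega
  have := ncard_le_k (insert a (insert b (insert c (Set.range f))))
  omega

lemma two_free {W : Type} {S : Set W} {f : ↥S → Fin k} (hf : Function.Injective f)
    (hS : S.ncard = k - 2) (hk : 3 ≤ k) {a b c : Fin k}
    (ha : a ∉ Set.range f) (hb : b ∉ Set.range f) (hc : c ∉ Set.range f) :
    a = b ∨ a = c ∨ b = c := by
  by_cases h1 : a = b
  · exact Or.inl h1
  by_cases h2 : a = c
  · exact Or.inr (Or.inl h2)
  exact Or.inr (Or.inr (three_not_mem hf hS hk ha hb hc h1 h2))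

lemma no_free {W : Type} {S : Set W} {f : ↥S → Fin k} (hf : Function.Injective f)
    (hS : S.ncard = k) {a : Fin k} (ha : a ∉ Set.range f) : False := by
  have hcard : (insert a (Set.range f)).ncard = k + 1 := by
    rw [Set.ncard_insert_of_notMem ha (Set.toFinite _), ncard_range_inj hf, hS]
  have := ncard_le_k (insert a (Set.range f))
  omega

lemma Tdel_ncard : (Tdel T v).ncard = (T \ {v}).ncard := by
  have himg : Subtype.val '' (Tdel T v) = T \ {v} := by
    ext w
    constructor
    · rintro ⟨u, hu, rfl⟩
      exact ⟨hu, u.2⟩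
    · rintro ⟨hw, hwv⟩
      exact ⟨⟨w, hwv⟩, hw, rfl⟩
  rw [← himg, Set.ncard_image_of_injective _ Subtype.val_injective]

lemma Tdel_ncard' (hv : v ∈ T) : (Tdel T v).ncard = T.ncard - 1 := by
  rw [Tdel_ncard, Set.ncard_diff_singleton_of_mem hv]

lemma T_ncard_pos (hv : v ∈ T) : 1 ≤ T.ncard :=
  (Set.ncard_pos (Set.toFinite _)).mpr ⟨v, hv⟩

lemma T_le_k (hT : G.IsClique T) (hcol : ∃ α : V → Fin k, IsColoring G k α) :
    T.ncard ≤ k := by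
  obtain ⟨α, hα⟩ := hcol
  have hf : Function.Injective (fun t : ↥T => α t.1) := by
    intro t1 t2 h
    by_contra hne
    exact hα t1.1 t2.1 (hT t1.2 t2.2 (fun h' => hne (Subtype.ext h'))) h
  calc T.ncard = (Set.range fun t : ↥T => α t.1).ncard := (ncard_range_inj hf).symm
    _ ≤ k := ncard_le_k _

lemma Tdel_clique (hT : G.IsClique T) :
    (G.induce (delSet v)).IsClique (Tdel T v) := by
  intro u1 h1 u2 h2 hne
  exact hT h1 h2 (fun h => hne (Subtype.ext h))

lemma T_ge_k1 (hconn : LConnected G (k - 2)) (hT : G.IsClique T) (hTne : T ≠ Set.univ)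
    (hv : v ∈ T) (hN : ∀ u, G.Adj v u → u ∈ T) (hk : 3 ≤ k) : k - 1 ≤ T.ncard := by
  obtain ⟨w0, hw0⟩ := (Set.ne_univ_iff_exists_notMem T).mp hTne
  have hcut : IsVertexCut G (T \ {v}) := by
    intro hpre
    have hvmem : v ∈ (T \ {v})ᶜ := by simp
    have hwmem : w0 ∈ (T \ {v})ᶜ := by simp [hw0]
    have key : ∀ (x y : ↥((T \ {v})ᶜ)) (p : (G.induce ((T \ {v})ᶜ)).Walk x y),
        x.1 = v → y.1 = v := by
      intro x y p
      induction p with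
      | nil => exact id
      | @cons a b c h p ih =>
        intro ha
        exfalso
        have hadj : G.Adj a.1 b.1 := h
        rw [ha] at hadj
        exact b.2 ⟨hN _ hadj, (G.ne_of_adj hadj).symm⟩
    obtain ⟨p⟩ := hpre ⟨v, hvmem⟩ ⟨w0, hwmem⟩
    have hwv : w0 = v := key _ _ p rfl
    rw [hwv] at hw0
    exact hw0 hv
  have h2 := hconn.2.2 _ hcut
  have h3 := Set.ncard_diff_singleton_of_mem hv
  have h4 := T_ncard_pos hv
  omega
section Part1

variable {V : Type} [Fintype V] [DecidableEq V] {G : SimpleGraph V} {k : ℕ} {T : Set V} {v : V}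

lemma ext_cg_adj (hN : ∀ u, G.Adj v u → u ∈ T)
    {β1 β2 : {α : ↥(delSet v) → Fin k // IsColoring (G.induce (delSet v)) k α}}
    (h : (colorGraph (G.induce (delSet v)) k).Adj β1 β2)
    (c : Fin k) (h1 : ValidC T β1.1 c) (h2 : ValidC T β2.1 c) :
    (colorGraph G k).Adj (extC hN β1 c h1) (extC hN β2 c h2) := by
  obtain ⟨u, hu, huniq⟩ := h
  refine ⟨u.1, ?_, ?_⟩
  · show extFun v β1.1 c u.1 ≠ extFun v β2.1 c u.1
    rw [extFun_ne _ _ u.2, extFun_ne _ _ u.2]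
    exact hu
  · intro w hw
    by_cases hwv : w = v
    · exfalso
      apply hw
      show extFun v β1.1 c w = extFun v β2.1 c w
      rw [hwv, extFun_v, extFun_v]
    · have hne : β1.1 ⟨w, hwv⟩ ≠ β2.1 ⟨w, hwv⟩ := by
        have : extFun v β1.1 c w ≠ extFun v β2.1 c w := hw
        rwa [extFun_ne _ _ hwv, extFun_ne _ _ hwv] at this
      exact congrArg Subtype.val (huniq ⟨w, hwv⟩ hne)

lemma part1 (hT : G.IsClique T) (hv : v ∈ T) (hN : ∀ u, G.Adj v u → u ∈ T)
    (hcc : IsColorComplete k (CSG (G.induce (delSet v)) k (Tdel T v))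
      (csgLabel (G.induce (delSet v)) k (Tdel T v))) :
    IsColorComplete k (CSG G k T) (csgLabel G k T) := by
  have hinj : ∀ x : CSGNode G k T, Function.Injective (csgLabel G k T x) :=
    fun x => label_injective hT x
  have hcomplete : ∀ f : ↥T → Fin k, Function.Injective f →
      ∃! x : CSGNode G k T, csgLabel G k T x = f := by
    intro f hf
    have hf' : Function.Injective (fun t : ↥(Tdel T v) => f ⟨t.1.1, t.2⟩) := by
      rintro ⟨⟨a, ha⟩, ha2⟩ ⟨⟨b, hb⟩, hb2⟩ h
      have h1 : a = b := congrArg Subtype.val (hf h)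
      subst h1
      rfl
    obtain ⟨x', hx', huniq'⟩ := hcc.2.1 _ hf'
    obtain ⟨β, rfl⟩ := x'.exists_rep
    have hβ : csgLabelFun (G.induce (delSet v)) k (Tdel T v) β
        = fun t : ↥(Tdel T v) => f ⟨t.1.1, t.2⟩ := hx'
    set c := f ⟨v, hv⟩ with hc
    have hvalid : ValidC T β.1 c := by
      intro u hu hcu
      have h1 : β.1 u = f ⟨u.1, hu⟩ := congrFun hβ ⟨u, hu⟩
      have h2 : f ⟨u.1, hu⟩ = f ⟨v, hv⟩ := by rw [← h1]; exact hcu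
      exact u.2 (congrArg Subtype.val (hf h2))
    have hlab : csgLabel G k T (csgNode G k T (extC hN β c hvalid)) = f := by
      funext t
      show extFun v β.1 c t.1 = f t
      by_cases htv : (t : V) = v
      · rw [htv, extFun_v]
        exact (congrArg f (Subtype.ext htv)).symm
      · rw [extFun_ne _ _ htv]
        exact congrFun hβ ⟨⟨t.1, htv⟩, t.2⟩
    refine ⟨csgNode G k T (extC hN β c hvalid), hlab, ?_⟩
    intro y hy
    obtain ⟨δ, rfl⟩ := y.exists_rep
    have hy' : csgLabelFun G k T δ = f := hy
    have hδv : δ.1 v = c := congrFun hy' ⟨v, hv⟩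
    have hresδ : csgLabel (G.induce (delSet v)) k (Tdel T v)
        (csgNode (G.induce (delSet v)) k (Tdel T v) (restrictColoring G k (delSet v) δ))
        = fun t : ↥(Tdel T v) => f ⟨t.1.1, t.2⟩ := by
      funext t
      exact congrFun hy' ⟨t.1.1, t.2⟩
    have hcomp' := huniq' _ hresδ
    have hreach' := SimpleGraph.ConnectedComponent.exact hcomp'
    have hvres := valid_res hT hv hN δ
    have hvres' : ValidC T (restrictColoring G k (delSet v) δ).1 c := by
      rw [← hδv]; exact hvres
    have hreach := SL_reach_ext hN hreach' c hvres' hvalid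
    have hgen : ∀ c' (hc' : ValidC T (restrictColoring G k (delSet v) δ).1 c'), c' = δ.1 v →
        extC hN (restrictColoring G k (delSet v) δ) c' hc' = δ := by
      rintro c' hc' rfl
      exact extC_res hN δ hc'
    rw [hgen c hvres' hδv.symm] at hreach
    exact SimpleGraph.ConnectedComponent.sound hreach
  refine ⟨hinj, hcomplete, ?_⟩
  intro x y
  constructor
  · intro h
    exact adj_unique_diff h
  · rintro ⟨t0, ht0, ht0u⟩
    obtain ⟨γ, rfl⟩ := x.exists_rep
    obtain ⟨δ, rfl⟩ := y.exists_rep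
    have hf1 : Function.Injective (csgLabelFun G k T γ) := hinj (csgNode G k T γ)
    have hf2 : Function.Injective (csgLabelFun G k T δ) := hinj (csgNode G k T δ)
    have ht0' : γ.1 t0.1 ≠ δ.1 t0.1 := ht0
    have hne : csgNode G k T γ ≠ csgNode G k T δ := by
      intro he
      exact ht0 (congrFun (congrArg (csgLabel G k T) he) t0)
    by_cases htv : (t0 : V) = v
    · -- labels differ exactly at v
      have hagree : ∀ u : ↥(delSet v), u.1 ∈ T → γ.1 u.1 = δ.1 u.1 := by
        intro u hu
        by_contra h'
        exact u.2 ((congrArg Subtype.val (ht0u ⟨u.1, hu⟩ h')).trans htv)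
      have hval2 : ValidC T (restrictColoring G k (delSet v) γ).1 (δ.1 v) := by
        intro u hu hcu
        have h1 : γ.1 u.1 = δ.1 u.1 := hagree u hu
        have h2 : csgLabelFun G k T δ ⟨u.1, hu⟩ = csgLabelFun G k T δ ⟨v, hv⟩ := by
          show δ.1 u.1 = δ.1 v
          rw [← h1]; exact hcu
        exact u.2 (congrArg Subtype.val (hf2 h2))
      set δ2 := extC hN (restrictColoring G k (delSet v) γ) (δ.1 v) hval2 with hδ2
      have hlabδ2 : csgLabel G k T (csgNode G k T δ2) = csgLabelFun G k T δ := by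
        funext t
        show extFun v (restrictColoring G k (delSet v) γ).1 (δ.1 v) t.1 = δ.1 t.1
        by_cases ht : (t : V) = v
        · rw [ht, extFun_v]
        · rw [extFun_ne _ _ ht]
          exact hagree ⟨t.1, ht⟩ t.2
      have hcompδ : csgNode G k T δ2 = csgNode G k T δ := by
        obtain ⟨z, hz, hzu⟩ := hcomplete (csgLabelFun G k T δ) hf2
        rw [hzu (csgNode G k T δ2) hlabδ2, hzu (csgNode G k T δ) rfl]
      refine ⟨hne, γ, δ2, rfl, hcompδ, ?_⟩
      rw [htv] at ht0'
      refine ⟨v, ?_, ?_⟩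
      · show γ.1 v ≠ extFun v (restrictColoring G k (delSet v) γ).1 (δ.1 v) v
        rw [extFun_v]
        exact ht0'
      · intro w hw
        by_contra hwv
        apply hw
        show γ.1 w = extFun v (restrictColoring G k (delSet v) γ).1 (δ.1 v) w
        rw [extFun_ne _ _ hwv]
        rfl
    · -- labels differ exactly at t0 ≠ v
      have hvv : γ.1 v = δ.1 v := by
        by_contra h'
        exact htv (congrArg Subtype.val (ht0u ⟨v, hv⟩ h')).symm
      have hadj' : (CSG (G.induce (delSet v)) k (Tdel T v)).Adj
          (csgNode _ _ _ (restrictColoring G k (delSet v) γ))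
          (csgNode _ _ _ (restrictColoring G k (delSet v) δ)) := by
        apply (hcc.2.2 _ _).mpr
        refine ⟨⟨⟨t0.1, htv⟩, t0.2⟩, ht0', ?_⟩
        intro s hs
        have h1 : (⟨s.1.1, s.2⟩ : ↥T) = t0 := ht0u ⟨s.1.1, s.2⟩ hs
        have h2 : (s.1.1 : V) = t0.1 := congrArg Subtype.val h1
        exact Subtype.ext (Subtype.ext h2)
      obtain ⟨hne', β1, β2, hb1, hb2, hadjcg⟩ := hadj'
      have hl1 := congrArg (csgLabel (G.induce (delSet v)) k (Tdel T v)) hb1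
      have hl2 := congrArg (csgLabel (G.induce (delSet v)) k (Tdel T v)) hb2
      have hl1' : ∀ u : ↥(delSet v), (hu : u.1 ∈ T) → β1.1 u = γ.1 u.1 :=
        fun u hu => congrFun hl1 ⟨u, hu⟩
      have hl2' : ∀ u : ↥(delSet v), (hu : u.1 ∈ T) → β2.1 u = δ.1 u.1 :=
        fun u hu => congrFun hl2 ⟨u, hu⟩
      have hval1 : ValidC T β1.1 (γ.1 v) := by
        intro u hu hcu
        rw [hl1' u hu] at hcu
        exact valid_res hT hv hN γ u hu hcu
      have hval2 : ValidC T β2.1 (γ.1 v) := by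
        intro u hu hcu
        rw [hl2' u hu] at hcu
        rw [hvv] at hcu
        exact valid_res hT hv hN δ u hu hcu
      have hadjG := ext_cg_adj hN hadjcg (γ.1 v) hval1 hval2
      have hlab1 : csgLabel G k T (csgNode G k T (extC hN β1 (γ.1 v) hval1))
          = csgLabelFun G k T γ := by
        funext t
        show extFun v β1.1 (γ.1 v) t.1 = γ.1 t.1
        by_cases ht : (t : V) = v
        · rw [ht, extFun_v]
        · rw [extFun_ne _ _ ht]
          exact hl1' ⟨t.1, ht⟩ t.2
      have hlab2 : csgLabel G k T (csgNode G k T (extC hN β2 (γ.1 v) hval2))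
          = csgLabelFun G k T δ := by
        funext t
        show extFun v β2.1 (γ.1 v) t.1 = δ.1 t.1
        by_cases ht : (t : V) = v
        · rw [ht, extFun_v]
          exact hvv
        · rw [extFun_ne _ _ ht]
          exact hl2' ⟨t.1, ht⟩ t.2
      have hcomp1 : csgNode G k T (extC hN β1 (γ.1 v) hval1) = csgNode G k T γ := by
        obtain ⟨z, hz, hzu⟩ := hcomplete (csgLabelFun G k T γ) hf1
        rw [hzu _ hlab1, hzu (csgNode G k T γ) rfl]
      have hcomp2 : csgNode G k T (extC hN β2 (γ.1 v) hval2) = csgNode G k T δ := by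
        obtain ⟨z, hz, hzu⟩ := hcomplete (csgLabelFun G k T δ) hf2
        rw [hzu _ hlab2, hzu (csgNode G k T δ) rfl]
      exact ⟨hne, extC hN β1 (γ.1 v) hval1, extC hN β2 (γ.1 v) hval2, hcomp1, hcomp2, hadjG⟩

end Part1
section Part2

variable {V : Type} [Fintype V] [DecidableEq V] {G : SimpleGraph V} {k : ℕ} {T : Set V} {v : V}

lemma label_resNode (hv : v ∈ T) (x : CSGNode G k T) (t : ↥(Tdel T v)) :
    csgLabel (G.induce (delSet v)) k (Tdel T v) (resNode hv x) t
      = csgLabel G k T x ⟨t.1.1, t.2⟩ := by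
  obtain ⟨γ, rfl⟩ := x.exists_rep
  rfl

lemma part2k (hT : G.IsClique T) (hcard : T.ncard = k) :
    IsAcyclic (CSG G k T) ∧ INP (CSG G k T) (csgLabel G k T) := by
  have hno : ∀ {x y : CSGNode G k T}, ¬ (CSG G k T).Adj x y := by
    intro x y h
    obtain ⟨t0, ht0, ht0u⟩ := adj_unique_diff h
    have hinjx := label_injective hT x
    have hinjy := label_injective hT y
    refine no_free hinjx hcard (a := csgLabel G k T y t0) ?_
    rintro ⟨t, ht⟩
    by_cases htt : t = t0
    · rw [htt] at ht; exact ht0 ht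
    · have h1 : csgLabel G k T x t = csgLabel G k T y t := by
        by_contra hne2; exact htt (ht0u t hne2)
      exact htt (hinjy (h1.symm.trans ht))
  constructor
  · intro x c hc
    cases c with
    | nil => exact hc.ne_nil rfl
    | cons h q => exact absurd h hno
  · intro u a b hua _ _
    exact absurd hua hno

lemma part2_acyclic (hk : 3 ≤ k) (hT : G.IsClique T) (hv : v ∈ T)
    (hN : ∀ u, G.Adj v u → u ∈ T) (hT2 : T.ncard = k - 1)
    (hfor : IsAcyclic (CSG (G.induce (delSet v)) k (Tdel T v))) :
    IsAcyclic (CSG G k T) := by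
  have hTd : (Tdel T v).ncard = k - 2 := by rw [Tdel_ncard' hv, hT2]; omega
  refine CSGAux.abstract_acyclic (π := resNode hv) ?_ hfor ?_ ?_
  · intro x y h
    rcases adj_cases hT hv hN h with ⟨h1, _⟩ | ⟨h1, _⟩
    · exact Or.inl h1
    · exact Or.inr h1
  · intro x y z h1 h2
    have hinj' := label_injective (Tdel_clique hT) (resNode hv x)
    have ha : vcolNode hv x
        ∉ Set.range (csgLabel (G.induce (delSet v)) k (Tdel T v) (resNode hv x)) := by
      rintro ⟨s, hs⟩
      exact vcol_not_range hT hv hN x s.1 s.2 hs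
    have hb : vcolNode hv y
        ∉ Set.range (csgLabel (G.induce (delSet v)) k (Tdel T v) (resNode hv x)) := by
      rintro ⟨s, hs⟩
      rw [h1] at hs
      exact vcol_not_range hT hv hN y s.1 s.2 hs
    have hc : vcolNode hv z
        ∉ Set.range (csgLabel (G.induce (delSet v)) k (Tdel T v) (resNode hv x)) := by
      rintro ⟨s, hs⟩
      rw [h2] at hs
      exact vcol_not_range hT hv hN z s.1 s.2 hs
    rcases two_free hinj' hTd hk ha hb hc with h | h | h
    · exact Or.inl (node_eq_of hT hv hN h1 h)
    · exact Or.inr (Or.inl (node_eq_of hT hv hN h2 h))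
    · exact Or.inr (Or.inr (node_eq_of hT hv hN (h1.symm.trans h2) h))
  · intro x y x2 y2 hxy hxy2 hpx hpy hpne
    rcases adj_cases hT hv hN hxy with ⟨h1, _⟩ | ⟨hadj1, hv1⟩
    · exact absurd h1 hpne
    rcases adj_cases hT hv hN hxy2 with ⟨h1, _⟩ | ⟨hadj2, hv2⟩
    · rw [← hpx, ← hpy] at h1
      exact absurd h1 hpne
    obtain ⟨s0, hs0, hs0u⟩ := adj_unique_diff hadj1
    have hinj1 := label_injective (Tdel_clique hT) (resNode hv x)
    have hinj2 := label_injective (Tdel_clique hT) (resNode hv y)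
    have hax : vcolNode hv x
        ∉ Set.range (csgLabel (G.induce (delSet v)) k (Tdel T v) (resNode hv x)) := by
      rintro ⟨s, hs⟩
      exact vcol_not_range hT hv hN x s.1 s.2 hs
    have hay : vcolNode hv y
        ∉ Set.range (csgLabel (G.induce (delSet v)) k (Tdel T v) (resNode hv y)) := by
      rintro ⟨s, hs⟩
      exact vcol_not_range hT hv hN y s.1 s.2 hs
    have hax2 : vcolNode hv x2
        ∉ Set.range (csgLabel (G.induce (delSet v)) k (Tdel T v) (resNode hv x)) := by
      rintro ⟨s, hs⟩
      rw [hpx] at hs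
      exact vcol_not_range hT hv hN x2 s.1 s.2 hs
    have hay2 : vcolNode hv y2
        ∉ Set.range (csgLabel (G.induce (delSet v)) k (Tdel T v) (resNode hv y)) := by
      rintro ⟨s, hs⟩
      rw [hpy] at hs
      exact vcol_not_range hT hv hN y2 s.1 s.2 hs
    have hTd : (Tdel T v).ncard = k - 2 := by rw [Tdel_ncard' hv, hT2]; omega
    have hs0r : csgLabel (G.induce (delSet v)) k (Tdel T v) (resNode hv y) s0
        ∉ Set.range (csgLabel (G.induce (delSet v)) k (Tdel T v) (resNode hv x)) := by
      rintro ⟨t, ht⟩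
      by_cases htt : t = s0
      · rw [htt] at ht; exact hs0 ht
      · have heq : csgLabel (G.induce (delSet v)) k (Tdel T v) (resNode hv x) t
            = csgLabel (G.induce (delSet v)) k (Tdel T v) (resNode hv y) t := by
          by_contra hne2; exact htt (hs0u t hne2)
        exact htt (hinj2 (heq.symm.trans ht))
    have haxL2 : vcolNode hv x
        ∉ Set.range (csgLabel (G.induce (delSet v)) k (Tdel T v) (resNode hv y)) := by
      rw [hv1]; exact hay
    have hax2L2 : vcolNode hv x2
        ∉ Set.range (csgLabel (G.induce (delSet v)) k (Tdel T v) (resNode hv y)) := by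
      rw [hv2]; exact hay2
    have hbc := three_not_mem hinj1 hTd hk hs0r hax hax2
      (fun h => haxL2 ⟨s0, h⟩) (fun h => hax2L2 ⟨s0, h⟩)
    constructor
    · exact node_eq_of hT hv hN hpx hbc
    · refine node_eq_of hT hv hN hpy ?_
      rw [← hv1, hbc, hv2]

lemma part2_inp (hT : G.IsClique T) (hv : v ∈ T) (hN : ∀ u, G.Adj v u → u ∈ T)
    (hinp : INP (CSG (G.induce (delSet v)) k (Tdel T v))
      (csgLabel (G.induce (delSet v)) k (Tdel T v))) :
    INP (CSG G k T) (csgLabel G k T) := by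
  intro u a b hua hub hne heq
  have hvab : vcolNode hv a = vcolNode hv b := congrFun heq ⟨v, hv⟩
  have hlab' : csgLabel (G.induce (delSet v)) k (Tdel T v) (resNode hv a)
      = csgLabel (G.induce (delSet v)) k (Tdel T v) (resNode hv b) := by
    funext t
    rw [label_resNode, label_resNode, heq]
  rcases adj_cases hT hv hN hua with ⟨h1a, _⟩ | ⟨hadja, hva⟩ <;>
    rcases adj_cases hT hv hN hub with ⟨h1b, _⟩ | ⟨hadjb, hvb⟩
  · exact hne (node_eq_of hT hv hN (h1a.symm.trans h1b) hvab)
  · obtain ⟨s0, hs0, -⟩ := adj_unique_diff hadjb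
    apply hs0
    rw [h1a, hlab']
  · obtain ⟨s0, hs0, -⟩ := adj_unique_diff hadja
    apply hs0
    rw [h1b, ← hlab']
  · by_cases hr : resNode hv a = resNode hv b
    · exact hne (node_eq_of hT hv hN hr hvab)
    · exact hinp _ _ _ hadja hadjb hr hlab'

end Part2
/-- the introduce operation preserves the invariant for `(k−2)`-connected
`k`-colorable chordal graphs: if `C^c_k(G−v, T∖{v})` is a `(k−2,k)`-color-complete
graph then `C^c_k(G,T)` is a `(k−1,k)`-color-complete graph, and if `|T| = k` or
`C^c_k(G−v, T∖{v})` is a forest satisfying the INP, then `C^c_k(G,T)` is a forest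
satisfying the INP. -/
theorem statement_12 {V : Type} [Fintype V] [DecidableEq V] (G : SimpleGraph V)
    (k : ℕ) (hk : 3 ≤ k) (hconn : LConnected G (k - 2)) (hchord : Chordal G)
    (hcol : ∃ α : V → Fin k, IsColoring G k α)
    (T : Set V) (hT : G.IsClique T) (hTne : T ≠ Set.univ) (v : V) (hv : v ∈ T)
    (hN : ∀ u : V, G.Adj v u → u ∈ T) :
    (((Tdel T v).ncard = k - 2 ∧
        IsColorComplete k (CSG (G.induce (delSet v)) k (Tdel T v))
          (csgLabel (G.induce (delSet v)) k (Tdel T v))) →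
      (T.ncard = k - 1 ∧ IsColorComplete k (CSG G k T) (csgLabel G k T))) ∧
    ((T.ncard = k ∨
        (IsAcyclic (CSG (G.induce (delSet v)) k (Tdel T v)) ∧
          INP (CSG (G.induce (delSet v)) k (Tdel T v))
            (csgLabel (G.induce (delSet v)) k (Tdel T v)))) →
      (IsAcyclic (CSG G k T) ∧ INP (CSG G k T) (csgLabel G k T))) := by
  constructor
  · rintro ⟨hcard', hcc⟩
    have h1 : (Tdel T v).ncard = T.ncard - 1 := Tdel_ncard' hv
    have h2 : 1 ≤ T.ncard := T_ncard_pos hv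
    have h3 : T.ncard = k - 1 := by omega
    exact ⟨h3, part1 hT hv hN hcc⟩
  · intro hyp
    have hTk1 : k - 1 ≤ T.ncard := T_ge_k1 hconn hT hTne hv hN hk
    have hTk2 : T.ncard ≤ k := T_le_k hT hcol
    rcases hyp with hk' | ⟨hfor, hinp⟩
    · exact part2k hT hk'
    · by_cases hcase : T.ncard = k
      · exact part2k hT hcase
      · have hT2 : T.ncard = k - 1 := by omega
        exact ⟨part2_acyclic hk hT hv hN hT2 hfor, part2_inp hT hv hN hinp⟩
end Ground4
end
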